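/- arXiv:1306.5154 — 2 statements merged into one kernel-verified Lean document; each statement's English description precedes it below -/
import Mathlib

section
/- The average eccentricity of the Lucas cube Λ_n, divided by n, converges to (5+√5)/10 as n → ∞. -/
open Finset

/-- Number of positions where two binary strings differ. -/
def diffCount {n : ℕ} (u v : Fin n → Bool) : ℕ :=
  (Finset.univ.filter fun i => u i ≠ v i).card

/-- Fibonacci strings: binary strings with no two consecutive 1's. -/
def FibPred (n : ℕ) (v : Fin n → Bool) : Prop :=
  ∀ i j : Fin n, (j : ℕ) = (i : ℕ) + 1 → ¬(v i = true ∧ v j = true)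

instance (n : ℕ) : DecidablePred (FibPred n) := fun v => by
  unfold FibPred; infer_instance

/-- Vertices of the Fibonacci cube: Fibonacci strings of length n. -/
def FibV (n : ℕ) := {v : Fin n → Bool // FibPred n v}

instance (n : ℕ) : Fintype (FibV n) := Subtype.fintype _
instance (n : ℕ) : DecidableEq (FibV n) := Subtype.instDecidableEq

/-- The Fibonacci cube Γ_n: Fibonacci strings adjacent iff they differ in exactly one position. -/
def fibCube (n : ℕ) : SimpleGraph (FibV n) where
  Adj u v := diffCount u.1 v.1 = 1
  symm := by
    constructor
    intro u v h
    have he : (Finset.univ.filter fun i => v.1 i ≠ u.1 i)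
        = (Finset.univ.filter fun i => u.1 i ≠ v.1 i) := by
      apply Finset.filter_congr; intro i _; exact ne_comm
    simpa [diffCount, he] using h
  loopless := by constructor; intro u h; simp [diffCount] at h

instance (n : ℕ) : DecidableRel (fibCube n).Adj := fun u v => Nat.decEq _ _

/-- Lucas strings: binary strings with no two cyclically consecutive 1's. -/
def LucasPred (n : ℕ) (v : Fin n → Bool) : Prop :=
  ∀ i j : Fin n, (j : ℕ) = ((i : ℕ) + 1) % n → ¬(v i = true ∧ v j = true)

instance (n : ℕ) : DecidablePred (LucasPred n) := fun v => by
  unfold LucasPred; infer_instance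

/-- Vertices of the Lucas cube: Lucas strings of length n. -/
def LucasV (n : ℕ) := {v : Fin n → Bool // LucasPred n v}

instance (n : ℕ) : Fintype (LucasV n) := Subtype.fintype _
instance (n : ℕ) : DecidableEq (LucasV n) := Subtype.instDecidableEq

/-- The Lucas cube Λ_n: Lucas strings adjacent iff they differ in exactly one position. -/
def lucasCube (n : ℕ) : SimpleGraph (LucasV n) where
  Adj u v := diffCount u.1 v.1 = 1
  symm := by
    constructor
    intro u v h
    have he : (Finset.univ.filter fun i => v.1 i ≠ u.1 i)
        = (Finset.univ.filter fun i => u.1 i ≠ v.1 i) := by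
      apply Finset.filter_congr; intro i _; exact ne_comm
    simpa [diffCount, he] using h
  loopless := by constructor; intro u h; simp [diffCount] at h

instance (n : ℕ) : DecidableRel (lucasCube n).Adj := fun u v => Nat.decEq _ _

/-- Eccentricity of a vertex in a finite graph: the maximum distance to any vertex. -/
noncomputable def gecc {V : Type*} [Fintype V] (G : SimpleGraph V) (u : V) : ℕ :=
  Finset.univ.sup (G.dist u)
section Helpers

variable {n : ℕ}

lemma fin_val_add_one [NeZero n] (hn : 1 < n) (i : Fin n) :
    ((i + 1 : Fin n) : ℕ) = ((i : ℕ) + 1) % n := by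
  rw [Fin.add_def, Fin.val_one', Nat.mod_eq_of_lt hn]

lemma lucas_iff [NeZero n] (hn : 1 < n) (u : Fin n → Bool) :
    LucasPred n u ↔ ∀ i : Fin n, ¬(u i = true ∧ u (i + 1) = true) := by
  constructor
  · intro h i
    exact h i (i+1) (fin_val_add_one hn i)
  · intro h i j hj
    have : j = i + 1 := by
      apply Fin.ext
      rw [fin_val_add_one hn i, hj]
    rw [this]
    exact h i

lemma lucas_mono {u v : Fin n → Bool} (h : ∀ i, u i = true → v i = true)
    (hv : LucasPred n v) : LucasPred n u := by
  intro i j hj hc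
  exact hv i j hj ⟨h i hc.1, h j hc.2⟩

end Helpers

section DiffCount

variable {n : ℕ}

lemma diffCount_comm (u v : Fin n → Bool) : diffCount u v = diffCount v u := by
  unfold diffCount
  congr 1
  apply Finset.filter_congr; intro i _; exact ne_comm

lemma diffCount_eq_zero_iff {u v : Fin n → Bool} : diffCount u v = 0 ↔ u = v := by
  unfold diffCount
  rw [Finset.card_eq_zero, Finset.filter_eq_empty_iff]
  constructor
  · intro h; funext i; have := h (Finset.mem_univ i); simpa using this
  · intro h i _; simp [h]

lemma diffCount_triangle (u v w : Fin n → Bool) :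
    diffCount u w ≤ diffCount u v + diffCount v w := by
  unfold diffCount
  refine le_trans (Finset.card_le_card ?_) (Finset.card_union_le _ _)
  intro i hi
  simp only [Finset.mem_filter, Finset.mem_univ, true_and, Finset.mem_union] at *
  by_cases h : u i = v i
  · right; rw [← h]; exact hi
  · left; exact h

lemma diffCount_le (u v : Fin n → Bool) : diffCount u v ≤ n := by
  calc diffCount u v ≤ Finset.univ.card := Finset.card_filter_le _ _
  _ = n := by simp

lemma diffCount_update (u : Fin n → Bool) (i : Fin n) (c : Bool) (hc : u i ≠ c) :
    diffCount u (Function.update u i c) = 1 := by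
  unfold diffCount
  have : (Finset.univ.filter fun j => u j ≠ Function.update u i c j) = {i} := by
    ext j
    simp only [Finset.mem_filter, Finset.mem_univ, true_and, Finset.mem_singleton]
    by_cases hj : j = i
    · subst hj; simp [Function.update_self, hc]
    · simp [Function.update_of_ne hj, hj]
  rw [this, Finset.card_singleton]

lemma diffCount_update_lt {u v : Fin n → Bool} (i : Fin n) (hi : u i ≠ v i) :
    diffCount (Function.update u i (v i)) v + 1 = diffCount u v := by
  unfold diffCount
  have h1 : (Finset.univ.filter fun j => Function.update u i (v i) j ≠ v j)
      = (Finset.univ.filter fun j => u j ≠ v j) \ {i} := by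
    ext j
    simp only [Finset.mem_filter, Finset.mem_univ, true_and, Finset.mem_sdiff,
      Finset.mem_singleton]
    by_cases hj : j = i
    · subst hj; simp [Function.update_self]
    · simp [Function.update_of_ne hj, hj]
  rw [h1, Finset.card_sdiff_of_subset (by simp [hi]), Finset.card_singleton]
  have : 1 ≤ (Finset.univ.filter fun j => u j ≠ v j).card := by
    rw [Nat.one_le_iff_ne_zero, ← Nat.pos_iff_ne_zero, Finset.card_pos]
    exact ⟨i, by simp [hi]⟩
  omega

end DiffCount

section Dist

variable {n : ℕ}

lemma lucas_walk_exists (m : ℕ) : ∀ (a b : LucasV n), diffCount a.1 b.1 = m →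
    ∃ W : (lucasCube n).Walk a b, W.length = m := by
  induction m using Nat.strong_induction_on with
  | _ m IH =>
  intro a b hab
  rcases Nat.eq_zero_or_pos m with hm | hm
  · subst hm
    have : a = b := Subtype.ext (diffCount_eq_zero_iff.mp hab)
    subst this
    exact ⟨SimpleGraph.Walk.nil, rfl⟩
  · -- find a coordinate to flip
    have hne : ∃ i, a.1 i ≠ b.1 i := by
      by_contra h
      push_neg at h
      have : a.1 = b.1 := funext h
      rw [← diffCount_eq_zero_iff] at this
      omega
    have key : ∃ i, a.1 i ≠ b.1 i ∧ LucasPred n (Function.update a.1 i (b.1 i)) := by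
      by_cases hc : ∃ i, a.1 i = true ∧ b.1 i = false
      · obtain ⟨i, h1, h2⟩ := hc
        refine ⟨i, by simp [h1, h2], ?_⟩
        apply lucas_mono (v := a.1) _ a.2
        intro j hj
        by_cases hji : j = i
        · subst hji; rw [Function.update_self, h2] at hj; exact absurd hj (by simp)
        · rwa [Function.update_of_ne hji] at hj
      · push_neg at hc
        obtain ⟨i, hi⟩ := hne
        refine ⟨i, hi, ?_⟩
        apply lucas_mono (v := b.1) _ b.2
        intro j hj
        by_cases hji : j = i
        · subst hji; rwa [Function.update_self] at hj
        · rw [Function.update_of_ne hji] at hj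
          cases hbj : b.1 j
          · exact absurd (hc j hj) (by simp [hbj])
          · rfl
    obtain ⟨i, hi, hL⟩ := key
    set a' : LucasV n := ⟨Function.update a.1 i (b.1 i), hL⟩ with ha'
    have hadj : (lucasCube n).Adj a a' := diffCount_update a.1 i (b.1 i) hi
    have hd : diffCount a'.1 b.1 + 1 = m := by
      rw [ha']; rw [diffCount_update_lt i hi]; exact hab
    obtain ⟨W, hW⟩ := IH (diffCount a'.1 b.1) (by omega) a' b rfl
    refine ⟨SimpleGraph.Walk.cons hadj W, ?_⟩
    rw [SimpleGraph.Walk.length_cons, hW]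
    exact hd

lemma lucas_dist_eq (a b : LucasV n) :
    (lucasCube n).dist a b = diffCount a.1 b.1 := by
  obtain ⟨W, hW⟩ := lucas_walk_exists (diffCount a.1 b.1) a b rfl
  have hub : (lucasCube n).dist a b ≤ diffCount a.1 b.1 := hW ▸ SimpleGraph.dist_le W
  have hreach : (lucasCube n).Reachable a b := ⟨W⟩
  obtain ⟨p, hp⟩ := hreach.exists_walk_length_eq_dist
  have hlb : diffCount a.1 b.1 ≤ (lucasCube n).dist a b := by
    rw [← hp]
    clear hp hub hW W
    induction p with
    | nil => simp [diffCount_eq_zero_iff.mpr rfl]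
    | @cons x y z h q IH =>
      have h1 : diffCount x.1 y.1 = 1 := h
      calc diffCount x.1 z.1 ≤ diffCount x.1 y.1 + diffCount y.1 z.1 :=
            diffCount_triangle _ _ _
      _ ≤ 1 + q.length := by rw [h1]; exact Nat.add_le_add_left (IH ⟨q⟩) 1
      _ = (SimpleGraph.Walk.cons h q).length := by simp [Nat.add_comm]
  omega

lemma gecc_lucas (a : LucasV n) :
    gecc (lucasCube n) a = Finset.univ.sup (fun b : LucasV n => diffCount a.1 b.1) := by
  unfold gecc
  apply Finset.sup_congr rfl
  intro b _
  exact lucas_dist_eq a b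

lemma gecc_lucas_le (a : LucasV n) : gecc (lucasCube n) a ≤ n := by
  rw [gecc_lucas]
  exact Finset.sup_le fun b _ => diffCount_le _ _

end Dist
section DD

open Fin.NatCast Fin.CommRing

variable {n : ℕ} [NeZero n]

/-- distance (cyclically forward) from j to the next 1 of u -/
def ddP (u : Fin n → Bool) (j : Fin n) (t : ℕ) : Prop :=
  0 < t ∧ u (j + (t : Fin n)) = true

instance (u : Fin n → Bool) (j : Fin n) : DecidablePred (ddP u j) := fun t => by
  unfold ddP; infer_instance

lemma dd_exists' {u : Fin n → Bool} (hu : ∃ i, u i = true) (j : Fin n) :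
    ∃ t, ddP u j t := by
  obtain ⟨i, hi⟩ := hu
  by_cases hij : i = j
  · refine ⟨n, Nat.pos_of_ne_zero (NeZero.ne n), ?_⟩
    rw [Fin.natCast_self, add_zero, ← hij]
    exact hi
  · refine ⟨(i - j).val, ?_, ?_⟩
    · refine Nat.pos_of_ne_zero fun h => ?_
      have h0 : i - j = 0 := Fin.ext (by simpa using h)
      exact hij (sub_eq_zero.mp h0)
    · rw [Fin.cast_val_eq_self, add_comm, sub_add_cancel]
      exact hi

open Classical in
noncomputable def dd (u : Fin n → Bool) (j : Fin n) : ℕ :=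
  if h : ∃ t, ddP u j t then Nat.find h else 0

lemma dd_spec_min {u : Fin n → Bool} (hu : ∃ i, u i = true) (j : Fin n) :
    ddP u j (dd u j) ∧ ∀ s, s < dd u j → ¬ ddP u j s := by
  unfold dd
  rw [dif_pos (dd_exists' hu j)]
  exact ⟨Nat.find_spec _, fun s hs => Nat.find_min _ hs⟩

lemma dd_le {u : Fin n → Bool} {j : Fin n} {t : ℕ} (ht : ddP u j t) :
    dd u j ≤ t := by
  unfold dd
  rw [dif_pos ⟨t, ht⟩]
  exact Nat.find_le ht

lemma dd_spec {u : Fin n → Bool} (hu : ∃ i, u i = true) (j : Fin n) :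
    ddP u j (dd u j) := (dd_spec_min hu j).1

lemma dd_min {u : Fin n → Bool} (hu : ∃ i, u i = true) (j : Fin n) {s : ℕ}
    (hs : s < dd u j) : ¬ ddP u j s := (dd_spec_min hu j).2 s hs

lemma dd_eq_of {u : Fin n → Bool} (hu : ∃ i, u i = true) (j : Fin n) {t : ℕ}
    (ht : ddP u j t) (hmin : ∀ s, s < t → ¬ ddP u j s) : dd u j = t := by
  refine le_antisymm (dd_le ht) ?_
  by_contra h
  push_neg at h
  exact hmin _ h (dd_spec hu j)

lemma dd_one {u : Fin n → Bool} (hu : ∃ i, u i = true) {j : Fin n}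
    (h1 : u (j + 1) = true) : dd u j = 1 := by
  apply dd_eq_of hu j
  · exact ⟨Nat.one_pos, by rwa [Nat.cast_one]⟩
  · intro s hs
    have : s = 0 := by omega
    subst this
    exact fun h => absurd h.1 (by simp)

lemma dd_rec {u : Fin n → Bool} (hu : ∃ i, u i = true) {j : Fin n}
    (h1 : u (j + 1) = false) : dd u j = dd u (j + 1) + 1 := by
  set m := dd u (j + 1) with hm
  apply dd_eq_of hu j
  · refine ⟨by omega, ?_⟩
    have hsp := (dd_spec hu (j + 1)).2
    have hc : ((m + 1 : ℕ) : Fin n) = (m : Fin n) + 1 := by push_cast; ring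
    rw [hc, show j + ((m:Fin n) + 1) = (j + 1) + (m : Fin n) by ring]
    exact hsp
  · intro s hs hP
    obtain ⟨hs0, hsu⟩ := hP
    rcases Nat.lt_or_ge s 2 with h2 | h2
    · have : s = 1 := by omega
      subst this
      rw [Nat.cast_one] at hsu
      rw [hsu] at h1; exact absurd h1 (by simp)
    · have hlt : s - 1 < m := by omega
      apply dd_min hu (j + 1) hlt
      refine ⟨by omega, ?_⟩
      have hc : ((s - 1 : ℕ) : Fin n) + 1 = ((s : ℕ) : Fin n) := by
        have : (s - 1) + 1 = s := by omega
        rw [← this]; push_cast; ring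
      rw [show j + 1 + ((s-1:ℕ) : Fin n) = j + (((s-1:ℕ):Fin n) + 1) by ring, hc]
      exact hsu

lemma dd_lt {u : Fin n → Bool} (hu : ∃ i, u i = true) {j : Fin n}
    (h0 : u j = false) : dd u j < n := by
  obtain ⟨i, hi⟩ := hu
  have hij : i ≠ j := fun h => by rw [h, h0] at hi; exact absurd hi (by simp)
  have hP : ddP u j ((i - j).val) := by
    refine ⟨?_, ?_⟩
    · refine Nat.pos_of_ne_zero fun h => ?_
      have h0 : i - j = 0 := Fin.ext (by simpa using h)
      exact hij (sub_eq_zero.mp h0)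
    · rw [Fin.cast_val_eq_self, add_comm, sub_add_cancel]; exact hi
  calc dd u j ≤ (i - j).val := dd_le hP
  _ < n := (i - j).isLt

lemma dd_even_step {u : Fin n → Bool} (hu : ∃ i, u i = true) {i : Fin n}
    (hoi : ¬ Odd (dd u i)) (hi0 : u i = false) :
    u (i + 1) = false ∧ Odd (dd u (i + 1)) := by
  have hpos : 0 < dd u i := (dd_spec hu i).1
  have h1 : u (i + 1) = false := by
    cases h : u (i + 1)
    · rfl
    · rw [dd_one hu h] at hoi; exact absurd ⟨0, by omega⟩ hoi
  refine ⟨h1, ?_⟩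
  have := dd_rec hu h1
  rw [Nat.odd_iff] at *
  omega

end DD

section EccFormula

variable {n : ℕ} [NeZero n]

def wcount (u : Fin n → Bool) : ℕ := (Finset.univ.filter fun i => u i = true).card

noncomputable def tcount (u : Fin n → Bool) : ℕ :=
  (Finset.univ.filter fun i => u i = false ∧ Odd (dd u i)).card

lemma diff_le_eBound (hn : 1 < n) {u v : Fin n → Bool} (hu : ∃ i, u i = true)
    (hv : LucasPred n v) : diffCount u v ≤ wcount u + tcount u := by
  have hsub : (Finset.univ.filter fun i => u i ≠ v i) ⊆
      (Finset.univ.filter fun i => u i = true) ∪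
      (Finset.univ.filter fun i => u i = false ∧ v i = true) := by
    intro i hi
    simp only [Finset.mem_filter, Finset.mem_univ, true_and, Finset.mem_union] at *
    cases h : u i
    · right; refine ⟨rfl, ?_⟩; cases hv' : v i; · rw [h, hv'] at hi; simp at hi
      · rfl
    · left; rfl
  have hS : (Finset.univ.filter fun i => u i = false ∧ v i = true).card ≤ tcount u := by
    apply Finset.card_le_card_of_injOn
      (fun i => if Odd (dd u i) then i else i + 1)
    · intro i hi
      simp only [Finset.mem_coe, Finset.mem_filter, Finset.mem_univ, true_and] at hi ⊢
      by_cases ho : Odd (dd u i)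
      · rw [if_pos ho]; exact ⟨hi.1, ho⟩
      · rw [if_neg ho]
        exact dd_even_step hu ho hi.1
    · intro a ha b hb hab
      simp only [Finset.coe_filter, Set.mem_setOf_eq, Finset.mem_univ, true_and] at ha hb
      by_cases hoa : Odd (dd u a) <;> by_cases hob : Odd (dd u b) <;>
        simp only [if_pos, if_neg, hoa, hob, if_true, if_false] at hab
      · exact hab
      · -- a = b + 1, both v-ones: contradicts Lucas
        exfalso
        have := (lucas_iff hn v).mp hv b
        rw [← hab] at this
        exact this ⟨hb.2, ha.2⟩
      · exfalso
        have := (lucas_iff hn v).mp hv a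
        rw [hab] at this
        exact this ⟨ha.2, hb.2⟩
      · exact add_right_cancel hab
  calc diffCount u v ≤ _ := Finset.card_le_card hsub
  _ ≤ _ + _ := Finset.card_union_le _ _
  _ ≤ wcount u + tcount u := by unfold wcount; omega

noncomputable def eWitness (u : Fin n → Bool) : Fin n → Bool :=
  fun i => decide (u i = false ∧ Odd (dd u i))

lemma eWitness_lucas (hn : 1 < n) (u : Fin n → Bool) (hu : ∃ i, u i = true) :
    LucasPred n (eWitness u) := by
  rw [lucas_iff hn]
  intro i hc
  simp only [eWitness, decide_eq_true_eq] at hc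
  obtain ⟨⟨h1, h2⟩, ⟨h3, h4⟩⟩ := hc
  have := dd_rec hu h3
  rw [Nat.odd_iff] at h2 h4
  omega

lemma diff_eWitness (u : Fin n → Bool) (hu : ∃ i, u i = true) :
    diffCount u (eWitness u) = wcount u + tcount u := by
  unfold diffCount wcount tcount
  rw [← Finset.card_union_of_disjoint]
  · congr 1
    ext i
    simp only [Finset.mem_filter, Finset.mem_univ, true_and, Finset.mem_union, eWitness]
    cases h : u i <;> simp [h]
  · rw [Finset.disjoint_filter]
    intro i _ h1 h2
    rw [h1] at h2
    simp at h2

lemma gecc_eq (hn : 1 < n) (a : LucasV n) (hu : ∃ i, a.1 i = true) :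
    gecc (lucasCube n) a = wcount a.1 + tcount a.1 := by
  rw [gecc_lucas]
  apply le_antisymm
  · exact Finset.sup_le fun b _ => diff_le_eBound hn hu b.2
  · have hw : (⟨eWitness a.1, eWitness_lucas hn a.1 hu⟩ : LucasV n) ∈ Finset.univ :=
      Finset.mem_univ _
    calc wcount a.1 + tcount a.1 = diffCount a.1 (eWitness a.1) :=
          (diff_eWitness a.1 hu).symm
    _ ≤ _ := Finset.le_sup (f := fun b : LucasV n => diffCount a.1 b.1) hw

end EccFormula
section FibCount

open Finset

def acount (m : ℕ) : ℕ := ((univ : Finset (Fin m → Bool)).filter (FibPred m)).card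

def ccount (m : ℕ) : ℕ :=
  ((univ : Finset (Fin m → Bool)).filter
    (fun v => FibPred m v ∧ ∀ i : Fin m, (i : ℕ) = 0 → v i = false)).card

lemma acount_zero : acount 0 = 1 := by
  have h : ((univ : Finset (Fin 0 → Bool)).filter (FibPred 0)) = univ :=
    Finset.filter_true_of_mem (fun v _ => fun i _ _ => i.elim0)
  rw [acount, h]
  simp

lemma ccount_zero : ccount 0 = 1 := by
  rw [ccount, Finset.filter_true_of_mem (fun v _ => ⟨fun i j _ => i.elim0, fun i => i.elim0⟩)]
  simp

lemma fibpred_tail {m : ℕ} {v : Fin (m+1) → Bool} (h : FibPred (m+1) v) :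
    FibPred m (Fin.tail v) := by
  intro i j hj
  exact h i.succ j.succ (by simp [Fin.val_succ, hj])

lemma fibpred_cons_false {m : ℕ} {w : Fin m → Bool} (hw : FibPred m w) :
    FibPred (m+1) (Fin.cons false w) := by
  intro i j hj hc
  induction i using Fin.cases with
  | zero => exact absurd hc.1 (by simp)
  | succ i' =>
    induction j using Fin.cases with
    | zero => simp [Fin.val_succ] at hj
    | succ j' =>
      have hj' : (j' : ℕ) = (i' : ℕ) + 1 := by
        simp only [Fin.val_succ] at hj; omega
      exact hw i' j' hj' (by simpa using hc)

lemma fibpred_cons_true {m : ℕ} {w : Fin m → Bool} (hw : FibPred m w)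
    (hw0 : ∀ i : Fin m, (i : ℕ) = 0 → w i = false) :
    FibPred (m+1) (Fin.cons true w) := by
  intro i j hj hc
  induction i using Fin.cases with
  | zero =>
    induction j using Fin.cases with
    | zero => simp at hj
    | succ j' =>
      have hj0 : (j' : ℕ) = 0 := by simp only [Fin.val_succ, Fin.val_zero] at hj; omega
      have := hw0 j' hj0
      rw [Fin.cons_succ] at hc
      rw [this] at hc
      exact absurd hc.2 (by simp)
  | succ i' =>
    induction j using Fin.cases with
    | zero => simp [Fin.val_succ] at hj
    | succ j' =>
      have hj' : (j' : ℕ) = (i' : ℕ) + 1 := by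
        simp only [Fin.val_succ] at hj; omega
      exact hw i' j' hj' (by simpa using hc)

lemma tail_zero_of {m : ℕ} {v : Fin (m+1) → Bool} (h : FibPred (m+1) v)
    (h0 : v 0 = true) : ∀ i : Fin m, (i : ℕ) = 0 → Fin.tail v i = false := by
  intro i hi
  have hadj := h 0 i.succ (by simp [Fin.val_succ, hi])
  cases hv : v i.succ
  · simpa [Fin.tail] using hv
  · exact absurd ⟨h0, hv⟩ hadj

lemma card_head_false {m : ℕ} :
    ((univ : Finset (Fin (m+1) → Bool)).filter
      (fun v => FibPred (m+1) v ∧ v 0 = false)).card = acount m := by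
  apply Finset.card_nbij' (i := fun v => Fin.tail v) (j := fun w => Fin.cons false w)
  · intro v hv
    simp only [mem_coe, mem_filter, mem_univ, true_and] at *
    exact fibpred_tail hv.1
  · intro w hw
    simp only [mem_coe, mem_filter, mem_univ, true_and] at *
    exact ⟨fibpred_cons_false hw, by simp⟩
  · intro v hv
    simp only [mem_coe, mem_filter, mem_univ, true_and] at hv
    rw [← hv.2]
    exact Fin.cons_self_tail v
  · intro w _
    exact Fin.tail_cons _ _

lemma card_head_true {m : ℕ} :
    ((univ : Finset (Fin (m+1) → Bool)).filter
      (fun v => FibPred (m+1) v ∧ v 0 = true)).card = ccount m := by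
  apply Finset.card_nbij' (i := fun v => Fin.tail v) (j := fun w => Fin.cons true w)
  · intro v hv
    simp only [mem_coe, mem_filter, mem_univ, true_and] at *
    exact ⟨fibpred_tail hv.1, tail_zero_of hv.1 hv.2⟩
  · intro w hw
    simp only [mem_coe, mem_filter, mem_univ, true_and] at *
    exact ⟨fibpred_cons_true hw.1 hw.2, by simp⟩
  · intro v hv
    simp only [mem_coe, mem_filter, mem_univ, true_and] at hv
    rw [← hv.2]
    exact Fin.cons_self_tail v
  · intro w _
    exact Fin.tail_cons _ _

lemma acount_succ (m : ℕ) : acount (m+1) = acount m + ccount m := by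
  have h := Finset.card_filter_add_card_filter_not
    (s := (univ : Finset (Fin (m+1) → Bool)).filter (FibPred (m+1)))
    (p := fun v => v 0 = false)
  rw [Finset.filter_filter, Finset.filter_filter] at h
  have h2 : ((univ : Finset (Fin (m+1) → Bool)).filter
      (fun v => FibPred (m+1) v ∧ ¬ v 0 = false)) =
      ((univ : Finset (Fin (m+1) → Bool)).filter
      (fun v => FibPred (m+1) v ∧ v 0 = true)) := by
    apply Finset.filter_congr
    intro v _
    simp
  rw [h2, card_head_false, card_head_true] at h
  rw [acount]
  omega

lemma ccount_succ (m : ℕ) : ccount (m+1) = acount m := by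
  rw [← card_head_false (m := m), ccount]
  congr 1
  apply Finset.filter_congr
  intro v _
  constructor
  · rintro ⟨h1, h2⟩; exact ⟨h1, h2 0 rfl⟩
  · rintro ⟨h1, h2⟩
    refine ⟨h1, fun i hi => ?_⟩
    have : i = 0 := Fin.ext (by simpa using hi)
    rwa [this]

lemma acount_eq : ∀ m, acount m = Nat.fib (m+2) ∧ ccount m = Nat.fib (m+1) := by
  intro m
  induction m with
  | zero => exact ⟨acount_zero, ccount_zero⟩
  | succ k ih =>
    refine ⟨?_, ?_⟩
    · have h3 : Nat.fib (k+3) = Nat.fib (k+1) + Nat.fib (k+2) := Nat.fib_add_two (n := k+1)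
      rw [acount_succ, ih.1, ih.2]
      show Nat.fib (k+2) + Nat.fib (k+1) = Nat.fib (k+3)
      omega
    · rw [ccount_succ, ih.1]

end FibCount
section PatternCount

open Finset

variable {n : ℕ}

/-- Lucas strings whose first `t` coordinates are 0. -/
def qset (n t : ℕ) : Finset (Fin n → Bool) :=
  univ.filter (fun u => LucasPred n u ∧ ∀ i : Fin n, (i : ℕ) < t → u i = false)

/-- Lucas strings with t zeros then a one. -/
def pset (n t : ℕ) : Finset (Fin n → Bool) :=
  univ.filter (fun u => LucasPred n u ∧ (∀ i : Fin n, (i : ℕ) < t → u i = false)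
    ∧ (∀ i : Fin n, (i : ℕ) = t → u i = true))

lemma qset_card {t : ℕ} (ht1 : 1 ≤ t) (ht2 : t ≤ n) : (qset n t).card = acount (n - t) := by
  apply Finset.card_nbij'
    (i := fun u (k : Fin (n - t)) => u ⟨k.val + t, by have := k.isLt; omega⟩)
    (j := fun w (i : Fin n) => if h : t ≤ i.val then w ⟨i.val - t, by have := i.isLt; omega⟩
      else false)
  · intro u hu
    simp only [qset, mem_coe, mem_filter, mem_univ, true_and] at hu
    simp only [acount, mem_coe, mem_filter, mem_univ, true_and]
    intro a b hb
    have hna := a.isLt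
    have hnb := b.isLt
    exact hu.1 ⟨a.val + t, by omega⟩ ⟨b.val + t, by omega⟩
      (show b.val + t = (a.val + t + 1) % n by rw [Nat.mod_eq_of_lt (by omega)]; omega)
  · intro w hw
    simp only [mem_coe, mem_filter, mem_univ, true_and] at hw
    simp only [qset, mem_coe, mem_filter, mem_univ, true_and]
    constructor
    · intro a b hb hc
      dsimp only at hc
      obtain ⟨hc1, hc2⟩ := hc
      have hna := a.isLt
      have hnb := b.isLt
      rcases Nat.lt_or_ge (a.val + 1) n with hlin | hwrap
      · rw [Nat.mod_eq_of_lt hlin] at hb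
        rcases Nat.lt_or_ge a.val t with hat | hat
        · rw [dif_neg (show ¬ t ≤ a.val by omega)] at hc1
          exact absurd hc1 (by simp)
        · rw [dif_pos hat] at hc1
          rw [dif_pos (show t ≤ b.val by omega)] at hc2
          exact hw ⟨a.val - t, by omega⟩ ⟨b.val - t, by omega⟩
            (show b.val - t = (a.val - t) + 1 by omega) ⟨hc1, hc2⟩
      · have hb0 : b.val = 0 := by
          have han : a.val + 1 = n := by omega
          rw [han, Nat.mod_self] at hb
          exact hb
        rw [dif_neg (show ¬ t ≤ b.val by omega)] at hc2
        exact absurd hc2 (by simp)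
    · intro i hi
      rw [dif_neg (by omega)]
  · intro u hu
    simp only [mem_coe, qset, mem_filter, mem_univ, true_and] at hu
    funext k
    dsimp only
    by_cases hk : t ≤ k.val
    · rw [dif_pos hk]
      congr 1
      exact Fin.ext (show k.val - t + t = k.val by omega)
    · rw [dif_neg hk]
      exact (hu.2 k (by omega)).symm
  · intro w _
    funext k
    dsimp only
    rw [dif_pos (show t ≤ k.val + t by omega)]
    congr 1
    exact Fin.ext (show k.val + t - t = k.val by omega)

lemma qset_card_fib {t : ℕ} (ht1 : 1 ≤ t) (ht2 : t ≤ n) :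
    (qset n t).card = Nat.fib (n - t + 2) := by
  rw [qset_card ht1 ht2, (acount_eq (n - t)).1]

/-- Lucas strings with a 1 in position 0. -/
lemma oneset_card (hn : 5 ≤ n) (h0 : 0 < n) :
    ((univ : Finset (Fin n → Bool)).filter
      (fun u => LucasPred n u ∧ u ⟨0, h0⟩ = true)).card = Nat.fib (n - 1) := by
  have hfib : acount (n - 3) = Nat.fib (n - 1) := by
    rw [(acount_eq (n-3)).1]
    congr 1
    omega
  rw [← hfib]
  apply Finset.card_nbij'
    (i := fun u (k : Fin (n - 3)) => u ⟨k.val + 2, by have := k.isLt; omega⟩)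
    (j := fun w (i : Fin n) => if i.val = 0 then true
      else if h : 2 ≤ i.val ∧ i.val ≤ n - 2 then w ⟨i.val - 2, by omega⟩ else false)
  · intro u hu
    simp only [mem_coe, mem_filter, mem_univ, true_and] at hu
    simp only [acount, mem_coe, mem_filter, mem_univ, true_and]
    intro a b hb
    have hna := a.isLt
    have hnb := b.isLt
    exact hu.1 ⟨a.val + 2, by omega⟩ ⟨b.val + 2, by omega⟩
      (show b.val + 2 = (a.val + 2 + 1) % n by rw [Nat.mod_eq_of_lt (by omega)]; omega)
  · intro w hw
    simp only [mem_coe, mem_filter, mem_univ, true_and] at hw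
    simp only [mem_coe, mem_filter, mem_univ, true_and]
    constructor
    · intro a b hb hc
      dsimp only at hc
      obtain ⟨hc1, hc2⟩ := hc
      have hna := a.isLt
      have hnb := b.isLt
      rcases Nat.lt_or_ge (a.val + 1) n with hlin | hwrap
      · rw [Nat.mod_eq_of_lt hlin] at hb
        rcases eq_or_ne a.val 0 with ha0 | ha0
        · rw [if_neg (show ¬ (b.val = 0) by omega),
            dif_neg (show ¬ (2 ≤ b.val ∧ b.val ≤ n - 2) by omega)] at hc2
          exact absurd hc2 (by simp)
        · rcases Nat.lt_or_ge a.val 2 with ha1 | ha2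
          · rw [if_neg (show ¬ (a.val = 0) by omega),
              dif_neg (show ¬ (2 ≤ a.val ∧ a.val ≤ n - 2) by omega)] at hc1
            exact absurd hc1 (by simp)
          · rcases Nat.lt_or_ge a.val (n - 2) with haf | haf
            · rw [if_neg (show ¬ (a.val = 0) by omega),
                dif_pos (show 2 ≤ a.val ∧ a.val ≤ n - 2 by omega)] at hc1
              rw [if_neg (show ¬ (b.val = 0) by omega),
                dif_pos (show 2 ≤ b.val ∧ b.val ≤ n - 2 by omega)] at hc2
              exact hw ⟨a.val - 2, by omega⟩ ⟨b.val - 2, by omega⟩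
                (show b.val - 2 = (a.val - 2) + 1 by omega) ⟨hc1, hc2⟩
            · rw [if_neg (show ¬ (b.val = 0) by omega),
                dif_neg (show ¬ (2 ≤ b.val ∧ b.val ≤ n - 2) by omega)] at hc2
              exact absurd hc2 (by simp)
      · have han : a.val = n - 1 := by omega
        rw [if_neg (show ¬ (a.val = 0) by omega),
          dif_neg (show ¬ (2 ≤ a.val ∧ a.val ≤ n - 2) by omega)] at hc1
        exact absurd hc1 (by simp)
    · simp
  · intro u hu
    simp only [mem_coe, mem_filter, mem_univ, true_and] at hu
    funext k
    dsimp only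
    have hnk := k.isLt
    rcases eq_or_ne k.val 0 with hk0 | hk0
    · rw [if_pos hk0]
      have hke : k = ⟨0, h0⟩ := Fin.ext hk0
      rw [hke, hu.2]
    · rw [if_neg hk0]
      by_cases hk : 2 ≤ k.val ∧ k.val ≤ n - 2
      · rw [dif_pos hk]
        congr 1
        exact Fin.ext (show k.val - 2 + 2 = k.val by omega)
      · rw [dif_neg hk]
        have hkk : k.val = 1 ∨ k.val = n - 1 := by omega
        rcases hkk with hk1 | hk1
        · have hadj := hu.1 ⟨0, h0⟩ k (show (k:ℕ) = (0 + 1) % n by rw [Nat.mod_eq_of_lt (by omega)]; omega)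
          cases hv : u k
          · rfl
          · exact absurd ⟨hu.2, hv⟩ hadj
        · have hadj := hu.1 k ⟨0, h0⟩ (show ((0:ℕ)) = ((k:ℕ) + 1) % n by rw [hk1]; rw [show n - 1 + 1 = n by omega, Nat.mod_self])
          cases hv : u k
          · rfl
          · exact absurd ⟨hv, hu.2⟩ hadj
  · intro w _
    funext k
    dsimp only
    have hnk := k.isLt
    rw [if_neg (show ¬ (k.val + 2 = 0) by omega), dif_pos (show 2 ≤ k.val + 2 ∧ k.val + 2 ≤ n - 2 by omega)]
    exact congrArg w (Fin.ext (show k.val + 2 - 2 = k.val by omega))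

lemma lucas_filter_card (hn : 5 ≤ n) :
    ((univ : Finset (Fin n → Bool)).filter (LucasPred n)).card
      = Nat.fib (n + 1) + Nat.fib (n - 1) := by
  have h0 : 0 < n := by omega
  have h2 : ((univ : Finset (Fin n → Bool)).filter
      (fun u => LucasPred n u ∧ ¬ u ⟨0, h0⟩ = true)) = qset n 1 := by
    rw [qset]
    apply Finset.filter_congr
    intro u _
    simp only [Bool.not_eq_true]
    constructor
    · rintro ⟨h1, h2⟩
      refine ⟨h1, fun i hi => ?_⟩
      have hie : i = ⟨0, h0⟩ := Fin.ext (show (i:ℕ) = (0:ℕ) by omega)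
      rwa [hie]
    · rintro ⟨h1, h2⟩
      exact ⟨h1, h2 ⟨0, h0⟩ (show (0:ℕ) < 1 from Nat.zero_lt_one)⟩
  have h := Finset.card_filter_add_card_filter_not
    (s := (univ : Finset (Fin n → Bool)).filter (LucasPred n))
    (p := fun u => u ⟨0, h0⟩ = true)
  rw [Finset.filter_filter, Finset.filter_filter] at h
  rw [oneset_card hn h0] at h
  rw [h2, qset_card_fib (by omega) (by omega)] at h
  have h3 : n - 1 + 2 = n + 1 := by omega
  rw [h3] at h
  omega

lemma qset_split {t : ℕ} (ht : t < n) :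
    (qset n t).card = (pset n t).card + (qset n (t+1)).card := by
  have e1 : (qset n t).filter (fun u => u ⟨t, ht⟩ = true) = pset n t := by
    rw [qset, pset, Finset.filter_filter]
    apply Finset.filter_congr
    intro u _
    constructor
    · rintro ⟨⟨h1, h2⟩, h3⟩
      refine ⟨h1, h2, fun i hi => ?_⟩
      have hie : i = ⟨t, ht⟩ := Fin.ext (show (i:ℕ) = t by omega)
      rwa [hie]
    · rintro ⟨h1, h2, h3⟩
      exact ⟨⟨h1, h2⟩, h3 ⟨t, ht⟩ rfl⟩
  have e2 : (qset n t).filter (fun u => ¬ u ⟨t, ht⟩ = true) = qset n (t+1) := by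
    rw [qset, qset, Finset.filter_filter]
    apply Finset.filter_congr
    intro u _
    simp only [Bool.not_eq_true]
    constructor
    · rintro ⟨⟨h1, h2⟩, h3⟩
      refine ⟨h1, fun i hi => ?_⟩
      rcases Nat.lt_or_ge (i.val) t with hit | hit
      · exact h2 i hit
      · have hie : i = ⟨t, ht⟩ := Fin.ext (show (i:ℕ) = t by omega)
        rwa [hie]
    · rintro ⟨h1, h2⟩
      exact ⟨⟨h1, fun i hi => h2 i (Nat.lt_succ_of_lt hi)⟩,
        h2 ⟨t, ht⟩ (show t < t + 1 from Nat.lt_succ_self t)⟩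
  have h := Finset.card_filter_add_card_filter_not
    (s := qset n t) (p := fun u => u ⟨t, ht⟩ = true)
  rw [e1, e2] at h
  omega

lemma pset_card {t : ℕ} (ht1 : 1 ≤ t) (ht : t < n) :
    (pset n t).card = Nat.fib (n - t) := by
  have h := qset_split ht
  rw [qset_card_fib ht1 (by omega), qset_card_fib (by omega) (by omega)] at h
  have e2 : n - (t+1) + 2 = (n - t) + 1 := by omega
  rw [e2] at h
  have h3 : Nat.fib ((n - t) + 2) = Nat.fib (n - t) + Nat.fib ((n - t) + 1) :=
    Nat.fib_add_two
  omega

end PatternCount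
section DCount

open Fin.NatCast Fin.CommRing

open Finset

variable {n : ℕ} [NeZero n]

noncomputable def dset (n : ℕ) [NeZero n] : Finset (Fin n → Bool) :=
  univ.filter (fun u => LucasPred n u ∧ u 0 = false ∧ Odd (dd u 0))

lemma fin_zero_val : ((0 : Fin n) : ℕ) = 0 := by simp

lemma dset_eq (hn : 5 ≤ n) :
    dset n = ((range n).filter (fun t => Odd t)).biUnion (fun t => pset n t) := by
  ext u
  simp only [dset, pset, mem_filter, mem_univ, true_and, mem_biUnion, mem_range]
  constructor
  · rintro ⟨hL, h0, hodd⟩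
    by_cases hex : ∃ t, ddP u 0 t
    · have hu : ∃ i, u i = true := by
        obtain ⟨t, _, h⟩ := hex; exact ⟨_, h⟩
      have hlt : dd u 0 < n := dd_lt hu h0
      have hspec := dd_spec hu 0
      refine ⟨dd u 0, ⟨hlt, hodd⟩, hL, ?_, ?_⟩
      · intro i hi
        rcases eq_or_ne (i : ℕ) 0 with hi0 | hi0
        · have : i = 0 := Fin.ext (by rw [hi0, fin_zero_val])
          rwa [this]
        · cases hv : u i
          · rfl
          · exfalso
            apply dd_min hu 0 hi
            refine ⟨by omega, ?_⟩
            rw [zero_add, Fin.cast_val_eq_self]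
            exact hv
      · intro i hi
        have he : ((dd u 0 : ℕ) : Fin n) = i := by
          apply Fin.ext
          rw [Fin.val_natCast, Nat.mod_eq_of_lt hlt, hi]
        rw [← he]
        have := hspec.2
        rwa [zero_add] at this
    · exfalso
      rw [dd, dif_neg hex] at hodd
      simp at hodd
  · rintro ⟨t, ⟨htn, htodd⟩, hL, hpre, hat⟩
    have ht1 : 1 ≤ t := by
      rcases htodd with ⟨k, hk⟩; omega
    have hut : u ⟨t, htn⟩ = true := hat ⟨t, htn⟩ rfl
    have hu : ∃ i, u i = true := ⟨⟨t, htn⟩, hut⟩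
    have h0 : u 0 = false := by
      have := hpre 0 (by rw [fin_zero_val]; omega)
      exact this
    refine ⟨hL, h0, ?_⟩
    have hdd : dd u 0 = t := by
      apply dd_eq_of hu 0
      · refine ⟨by omega, ?_⟩
        rw [zero_add]
        have he : ((t : ℕ) : Fin n) = ⟨t, htn⟩ := by
          apply Fin.ext
          rw [Fin.val_natCast, Nat.mod_eq_of_lt htn]
        rw [he]
        exact hut
      · intro s hs hP
        obtain ⟨hs0, hsu⟩ := hP
        rw [zero_add] at hsu
        have he : ((s : ℕ) : Fin n) = ⟨s, by omega⟩ := by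
          apply Fin.ext
          rw [Fin.val_natCast, Nat.mod_eq_of_lt (by omega)]
        rw [he] at hsu
        have := hpre ⟨s, by omega⟩ (by exact hs)
        rw [this] at hsu
        exact absurd hsu (by simp)
    rw [hdd]
    exact htodd

lemma dset_card (hn : 5 ≤ n) :
    (dset n).card = ∑ t ∈ (range n).filter (fun t => Odd t), Nat.fib (n - t) := by
  rw [dset_eq hn]
  rw [Finset.card_biUnion]
  · apply Finset.sum_congr rfl
    intro t ht
    simp only [mem_filter, mem_range] at ht
    have ht1 : 1 ≤ t := by rcases ht.2 with ⟨k, hk⟩; omega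
    exact pset_card ht1 ht.1
  · intro x hx y hy hxy
    simp only [mem_coe, mem_filter, mem_range] at hx hy
    rw [Function.onFun, Finset.disjoint_left]
    intro u hux huy
    simp only [pset, mem_filter, mem_univ, true_and] at hux huy
    rcases Nat.lt_or_ge x y with hlt | hge
    · have h1 := hux.2.2 ⟨x, hx.1⟩ rfl
      have h2 := huy.2.1 ⟨x, hx.1⟩ (by exact hlt)
      rw [h1] at h2
      exact absurd h2 (by simp)
    · have hlt : y < x := by omega
      have h1 := huy.2.2 ⟨y, hy.1⟩ rfl
      have h2 := hux.2.1 ⟨y, hy.1⟩ (by exact hlt)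
      rw [h1] at h2
      exact absurd h2 (by simp)

end DCount

section FibSums

open Finset

lemma J1 (m : ℕ) : (∑ t ∈ range m, if t % 2 = 0 then Nat.fib (t+1) else 0)
    = if m % 2 = 0 then Nat.fib m else Nat.fib (m+1) := by
  induction m with
  | zero => simp
  | succ k ih =>
    rw [Finset.sum_range_succ, ih]
    by_cases h : k % 2 = 0
    · rw [if_pos h, if_pos h, if_neg (by omega)]
      exact (Nat.fib_add_two).symm
    · rw [if_neg h, if_neg h, if_pos (by omega), add_zero]

lemma J2 (m : ℕ) : (∑ t ∈ range m, if t % 2 = 1 then Nat.fib (t+1) else 0) + 1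
    = if m % 2 = 0 then Nat.fib (m+1) else Nat.fib m := by
  induction m with
  | zero => simp
  | succ k ih =>
    rw [Finset.sum_range_succ]
    by_cases h : k % 2 = 0
    · rw [if_pos h] at ih
      rw [if_neg (by omega), if_neg (by omega), add_zero]
      exact ih
    · rw [if_neg h] at ih
      rw [if_pos (by omega), if_pos (by omega)]
      have hf : Nat.fib (k + 2) = Nat.fib k + Nat.fib (k+1) := Nat.fib_add_two
      have he : Nat.fib (k + 1 + 1) = Nat.fib (k + 2) := rfl
      omega

lemma sum_fib_odd {n : ℕ} (hn : 1 ≤ n) :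
    (∑ t ∈ (range n).filter (fun t => Odd t), Nat.fib (n - t))
      + (if Odd n then 1 else 0) = Nat.fib n := by
  rw [Finset.sum_filter]
  rw [← Finset.sum_range_reflect (fun t => if Odd t then Nat.fib (n - t) else 0) n]
  have hcong : ∀ j ∈ range n, (if Odd (n - 1 - j) then Nat.fib (n - (n - 1 - j)) else 0)
      = (if j % 2 = n % 2 then Nat.fib (j+1) else 0) := by
    intro j hj
    rw [mem_range] at hj
    have h1 : n - (n - 1 - j) = j + 1 := by omega
    rw [h1]
    exact if_congr (by rw [Nat.odd_iff]; omega) rfl rfl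
  rw [Finset.sum_congr rfl hcong]
  by_cases hpar : n % 2 = 0
  · have hc2 : ∀ j ∈ range n, (if j % 2 = n % 2 then Nat.fib (j+1) else 0)
        = (if j % 2 = 0 then Nat.fib (j+1) else 0) := by
      intro j _; exact if_congr (by omega) rfl rfl
    rw [Finset.sum_congr rfl hc2, J1, if_pos hpar, if_neg (by rw [Nat.odd_iff]; omega)]
    omega
  · have hc2 : ∀ j ∈ range n, (if j % 2 = n % 2 then Nat.fib (j+1) else 0)
        = (if j % 2 = 1 then Nat.fib (j+1) else 0) := by
      intro j _; exact if_congr (by omega) rfl rfl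
    rw [Finset.sum_congr rfl hc2, if_pos (by rw [Nat.odd_iff]; omega)]
    have := J2 n
    rw [if_neg hpar] at this
    exact this

end FibSums
section Rotation

open Fin.NatCast Fin.CommRing

open Finset

variable {n : ℕ} [NeZero n]

def rot (j : Fin n) (u : Fin n → Bool) : Fin n → Bool := fun i => u (i + j)

lemma rot_rot_neg (j : Fin n) (u : Fin n → Bool) : rot j (rot (-j) u) = u := by
  funext i
  show u ((i + j) + -j) = u i
  rw [add_neg_cancel_right]

lemma rot_neg_rot (j : Fin n) (u : Fin n → Bool) : rot (-j) (rot j u) = u := by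
  funext i
  show u ((i + -j) + j) = u i
  rw [neg_add_cancel_right]

lemma rot_lucas (hn : 1 < n) {u : Fin n → Bool} (hL : LucasPred n u) (j : Fin n) :
    LucasPred n (rot j u) := by
  rw [lucas_iff hn] at hL ⊢
  intro i hc
  apply hL (i + j)
  refine ⟨hc.1, ?_⟩
  have he : i + 1 + j = (i + j) + 1 := by ring
  have := hc.2
  show u ((i + j) + 1) = true
  rw [← he]
  exact this

open Classical in
lemma find0_congr {p q : ℕ → Prop} [DecidablePred p] [DecidablePred q]
    (h : ∀ t, p t ↔ q t) :
    (if h' : ∃ t, p t then Nat.find h' else 0)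
      = (if h' : ∃ t, q t then Nat.find h' else 0) := by
  by_cases hp : ∃ t, p t
  · have hq : ∃ t, q t := ⟨hp.choose, (h _).1 hp.choose_spec⟩
    rw [dif_pos hp, dif_pos hq]
    exact le_antisymm (Nat.find_le ((h _).2 (Nat.find_spec hq)))
      (Nat.find_le ((h _).1 (Nat.find_spec hp)))
  · have hq : ¬ ∃ t, q t := fun ⟨t, ht⟩ => hp ⟨t, (h t).2 ht⟩
    rw [dif_neg hp, dif_neg hq]

lemma rot_dd (u : Fin n → Bool) (j : Fin n) : dd (rot j u) 0 = dd u j := by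
  unfold dd
  apply find0_congr
  intro t
  show (0 < t ∧ rot j u (0 + (t : Fin n)) = true) ↔ (0 < t ∧ u (j + (t : Fin n)) = true)
  have he : rot j u (0 + (t : Fin n)) = u (j + (t : Fin n)) := by
    show u ((0 + (t : Fin n)) + j) = _
    rw [zero_add, add_comm]
  rw [he]

noncomputable def fcount (u : Fin n → Bool) (j : Fin n) : ℕ :=
  (if u j = true then 1 else 0) + (if u j = false ∧ Odd (dd u j) then 1 else 0)

lemma fcount_rot (hn : 1 < n) (j : Fin n) :
    ∑ u ∈ univ.filter (LucasPred n), fcount u j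
      = ∑ u ∈ univ.filter (LucasPred n), fcount u 0 := by
  apply Finset.sum_nbij' (i := fun u => rot j u) (j := fun u => rot (-j) u)
  · intro u hu
    simp only [mem_coe, mem_filter, mem_univ, true_and] at *
    exact rot_lucas hn hu j
  · intro u hu
    simp only [mem_coe, mem_filter, mem_univ, true_and] at *
    exact rot_lucas hn hu (-j)
  · intro u _
    exact rot_neg_rot j u
  · intro u _
    exact rot_rot_neg j u
  · intro u _
    unfold fcount
    rw [rot_dd]
    have he : rot j u 0 = u j := by
      show u (0 + j) = u j
      rw [zero_add]
    rw [he]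

lemma count_pos0 (hn : 5 ≤ n) :
    (∑ u ∈ univ.filter (LucasPred n), fcount u 0) + (if Odd n then 1 else 0)
      = Nat.fib (n + 1) := by
  have h0 : 0 < n := by omega
  have hsplit : ∑ u ∈ univ.filter (LucasPred n), fcount u 0
      = ((univ.filter (LucasPred n)).filter (fun u => u 0 = true)).card
        + ((univ.filter (LucasPred n)).filter
            (fun u => u 0 = false ∧ Odd (dd u 0))).card := by
    unfold fcount
    rw [Finset.sum_add_distrib]
    congr 1
    · rw [Finset.card_filter]
    · rw [Finset.card_filter]
  rw [hsplit, Finset.filter_filter, Finset.filter_filter]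
  clear hsplit
  have hone : ((univ : Finset (Fin n → Bool)).filter
      (fun u => LucasPred n u ∧ u 0 = true)).card = Nat.fib (n - 1) := by
    have hzero : (0 : Fin n) = ⟨0, h0⟩ := Fin.ext (by simp)
    simp only [hzero]
    exact oneset_card hn h0
  have hdset : ((univ : Finset (Fin n → Bool)).filter
      (fun u => LucasPred n u ∧ u 0 = false ∧ Odd (dd u 0))).card
      = (dset n).card := rfl
  rw [hone, hdset, dset_card hn]
  clear hone hdset
  have hsum := sum_fib_odd (n := n) (by omega)
  have hfib : Nat.fib (n + 1) = Nat.fib (n - 1) + Nat.fib n := by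
    have h2 : Nat.fib (n - 1 + 2) = Nat.fib (n - 1) + Nat.fib (n - 1 + 1) :=
      Nat.fib_add_two
    have e1 : n - 1 + 2 = n + 1 := by omega
    have e2 : n - 1 + 1 = n := by omega
    rw [e1, e2] at h2
    exact h2
  set S := ∑ t ∈ (range n).filter (fun t => Odd t), Nat.fib (n - t) with hS
  set e := (if Odd n then 1 else 0) with he
  clear_value S e
  clear hS he
  omega

lemma sum_fcount (hn : 5 ≤ n) :
    (∑ u ∈ univ.filter (LucasPred n), (wcount u + tcount u))
      = n * (Nat.fib (n + 1) - (if Odd n then 1 else 0)) := by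
  have hn1 : 1 < n := by omega
  have h1 : ∀ u : Fin n → Bool, wcount u + tcount u = ∑ j : Fin n, fcount u j := by
    intro u
    unfold wcount tcount fcount
    rw [Finset.sum_add_distrib, Finset.card_filter, Finset.card_filter]
  rw [Finset.sum_congr rfl (fun u _ => h1 u), Finset.sum_comm]
  have h2 : ∀ j : Fin n, ∑ u ∈ univ.filter (LucasPred n), fcount u j
      = Nat.fib (n + 1) - (if Odd n then 1 else 0) := by
    intro j
    clear h1
    rw [fcount_rot hn1 j]
    have hc := count_pos0 hn
    set S := ∑ u ∈ univ.filter (LucasPred n), fcount u 0 with hS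
    set e := (if Odd n then 1 else 0) with he
    clear_value S e
    clear hS he
    omega
  rw [Finset.sum_congr rfl (fun j _ => h2 j), Finset.sum_const, Finset.card_univ,
    Fintype.card_fin, smul_eq_mul]

lemma zero_lucas : LucasPred n (fun _ => false) := by
  intro i j _ hc
  exact absurd hc.1 (by simp)

lemma wcount_zero : wcount (n := n) (fun _ => false) = 0 := by
  unfold wcount
  simp

lemma tcount_zero : tcount (n := n) (fun _ => false) = 0 := by
  unfold tcount
  have hdd : ∀ j : Fin n, dd (fun _ => false) j = 0 := by
    intro j
    unfold dd
    rw [dif_neg]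
    rintro ⟨t, _, h⟩
    simp at h
  have : ∀ j : Fin n, ¬ ((fun _ => false : Fin n → Bool) j = false ∧ Odd (dd (fun _ => false : Fin n → Bool) j)) := by
    intro j hc
    rw [hdd j] at hc
    exact absurd hc.2 (by simp)
  rw [Finset.filter_false_of_mem (fun j _ => this j), Finset.card_empty]

lemma sum_gecc (hn : 5 ≤ n) :
    (∑ u : LucasV n, gecc (lucasCube n) u)
      = n * (Nat.fib (n + 1) - (if Odd n then 1 else 0))
        + gecc (lucasCube n) ⟨fun _ => false, zero_lucas⟩ := by
  have hn1 : 1 < n := by omega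
  set zv : LucasV n := ⟨fun _ => false, zero_lucas⟩ with hzv
  have hstep : ∀ u : LucasV n, gecc (lucasCube n) u
      = wcount u.1 + tcount u.1 + (if u = zv then gecc (lucasCube n) zv else 0) := by
    intro u
    by_cases hu : u = zv
    · rw [if_pos hu, hu]
      show gecc (lucasCube n) zv = wcount (fun _ => false) + tcount (fun _ => false) + _
      rw [wcount_zero, tcount_zero]
      simp
    · rw [if_neg hu, add_zero]
      apply gecc_eq hn1
      by_contra h
      push_neg at h
      apply hu
      apply Subtype.ext
      funext i
      have hi := h i
      show u.1 i = false
      cases hv : u.1 i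
      · rfl
      · exact absurd hv hi
  rw [Finset.sum_congr rfl (fun u _ => hstep u), Finset.sum_add_distrib,
    Finset.sum_ite_eq' Finset.univ zv, if_pos (Finset.mem_univ _)]
  congr 1
  rw [← sum_fcount hn]
  exact (Finset.sum_subtype (s := univ.filter (LucasPred n)) (by simp)
    (fun u => wcount u + tcount u)).symm

lemma card_lucasV (hn : 5 ≤ n) :
    Fintype.card (LucasV n) = Nat.fib (n + 1) + Nat.fib (n - 1) := by
  rw [← lucas_filter_card hn]
  exact Fintype.card_subtype _

end Rotation
section Analysis

open Filter Real

lemma sum_gecc_bounds {n : ℕ} [NeZero n] (hn : 5 ≤ n) :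
    n * Nat.fib (n + 1) - n ≤ (∑ u : LucasV n, gecc (lucasCube n) u) ∧
    (∑ u : LucasV n, gecc (lucasCube n) u) ≤ n * Nat.fib (n + 1) + n := by
  have h := sum_gecc hn
  have hz := gecc_lucas_le (⟨fun _ => false, zero_lucas⟩ : LucasV n)
  rw [h]
  have he1 : (if Odd n then 1 else 0) ≤ 1 := by split <;> omega
  set e := (if Odd n then 1 else 0) with he
  clear_value e
  clear he
  have hF : 1 ≤ Nat.fib (n + 1) := Nat.fib_pos.mpr (by omega)
  set F := Nat.fib (n + 1) with hFd
  clear_value F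
  have hm : n * (F - e) + n * e = n * F := by
    rw [← Nat.mul_add]
    congr 1
    omega
  have hne : n * e ≤ n := by
    calc n * e ≤ n * 1 := Nat.mul_le_mul_left n he1
    _ = n := Nat.mul_one n
  omega

lemma gold_facts : (1:ℝ) < goldenRatio ∧ goldenConj < 0 ∧ (1:ℝ) < Real.sqrt 5 := by
  have h15 : (1:ℝ) < Real.sqrt 5 := by
    rw [show (1:ℝ) = Real.sqrt 1 from (Real.sqrt_one).symm]
    exact Real.sqrt_lt_sqrt (by norm_num) (by norm_num)
  refine ⟨one_lt_goldenRatio, ?_, h15⟩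
  have hconj : goldenConj = (1 - Real.sqrt 5)/2 := rfl
  rw [hconj]
  linarith

lemma tendsto_fib_ratio : Tendsto (fun m : ℕ => (Nat.fib m : ℝ) * Real.sqrt 5
    / goldenRatio ^ m) atTop (nhds 1) := by
  obtain ⟨hgold, hconjneg, h15⟩ := gold_facts
  have h5pos : (0:ℝ) < Real.sqrt 5 := by linarith
  have hgpos : (0:ℝ) < goldenRatio := by linarith
  have hpow : ∀ m : ℕ, goldenRatio ^ m ≠ 0 := fun m => pow_ne_zero m (by linarith)
  have habs : |goldenConj / goldenRatio| < 1 := by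
    rw [abs_div, abs_of_pos hgpos, abs_of_neg hconjneg, div_lt_one hgpos]
    have hconj : goldenConj = (1 - Real.sqrt 5)/2 := rfl
    have hgr : goldenRatio = (1 + Real.sqrt 5)/2 := rfl
    rw [hconj, hgr]
    linarith
  have heq : ∀ m : ℕ, (Nat.fib m : ℝ) * Real.sqrt 5 / goldenRatio ^ m
      = 1 - (goldenConj / goldenRatio) ^ m := by
    intro m
    rw [Real.coe_fib_eq]
    rw [div_mul_cancel₀ _ (ne_of_gt h5pos), sub_div, div_self (hpow m), ← div_pow]
  have hpowlim := tendsto_pow_atTop_nhds_zero_of_abs_lt_one habs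
  have h2 : Tendsto (fun m : ℕ => 1 - (goldenConj / goldenRatio) ^ m) atTop (nhds 1) := by
    have h3 := (tendsto_const_nhds :
      Tendsto (fun _ : ℕ => (1:ℝ)) atTop (nhds 1)).sub hpowlim
    simpa using h3
  exact h2.congr (fun m => (heq m).symm)

lemma tendsto_ratio_shift (c : ℝ) :
    Tendsto (fun n : ℕ => ((Nat.fib (n+1) : ℝ) + c) / ((Nat.fib (n+1) : ℝ) + (Nat.fib (n-1) : ℝ)))
      atTop (nhds ((5 + Real.sqrt 5) / 10)) := by
  obtain ⟨hgold, hconjneg, h15⟩ := gold_facts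
  have h5pos : (0:ℝ) < Real.sqrt 5 := by linarith
  have hs5 : Real.sqrt 5 * Real.sqrt 5 = 5 := Real.mul_self_sqrt (by norm_num)
  have hgpos : (0:ℝ) < goldenRatio := by linarith
  have hxa : Tendsto (fun n : ℕ => (Nat.fib (n+1) : ℝ) * Real.sqrt 5 / goldenRatio ^ (n+1))
      atTop (nhds 1) := tendsto_fib_ratio.comp (tendsto_add_atTop_nat 1)
  have hxb : Tendsto (fun n : ℕ => (Nat.fib (n-1) : ℝ) * Real.sqrt 5 / goldenRatio ^ (n+1))
      atTop (nhds (1 / goldenRatio^2)) := by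
    have hb0 : Tendsto (fun m : ℕ => ((Nat.fib m : ℝ) * Real.sqrt 5 / goldenRatio ^ m) / goldenRatio ^ 2)
        atTop (nhds (1 / goldenRatio^2)) := tendsto_fib_ratio.div_const _
    have hb1 := hb0.comp (tendsto_sub_atTop_nat 1)
    apply hb1.congr'
    filter_upwards [eventually_ge_atTop 1] with n hn1
    show (Nat.fib (n-1) : ℝ) * Real.sqrt 5 / goldenRatio ^ (n-1) / goldenRatio ^ 2 = _
    rw [div_div, ← pow_add]
    congr 2
    omega
  have hxc : Tendsto (fun n : ℕ => Real.sqrt 5 * c / goldenRatio ^ (n+1)) atTop (nhds 0) := by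
    have h0 : Tendsto (fun m : ℕ => (1/goldenRatio) ^ m) atTop (nhds 0) := by
      apply tendsto_pow_atTop_nhds_zero_of_abs_lt_one
      rw [abs_of_pos (by positivity), div_lt_one hgpos]
      exact hgold
    have h1 := (h0.comp (tendsto_add_atTop_nat 1)).const_mul (Real.sqrt 5 * c)
    rw [mul_zero] at h1
    apply h1.congr
    intro n
    show Real.sqrt 5 * c * (1/goldenRatio)^(n+1) = _
    rw [div_pow, one_pow]
    ring
  have hden_ne : (1 : ℝ) + 1/goldenRatio^2 ≠ 0 := by positivity
  have hcomb : Tendsto (fun n : ℕ =>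
      ((Nat.fib (n+1) : ℝ) * Real.sqrt 5 / goldenRatio ^ (n+1) + Real.sqrt 5 * c / goldenRatio ^ (n+1)) /
      ((Nat.fib (n+1) : ℝ) * Real.sqrt 5 / goldenRatio ^ (n+1) + (Nat.fib (n-1) : ℝ) * Real.sqrt 5 / goldenRatio ^ (n+1)))
      atTop (nhds ((1 + 0) / (1 + 1/goldenRatio^2))) :=
    Tendsto.div (hxa.add hxc) (hxa.add hxb) hden_ne
  have hlim_eq : (1 + 0 : ℝ) / (1 + 1/goldenRatio^2) = (5 + Real.sqrt 5) / 10 := by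
    have hgr : goldenRatio = (1 + Real.sqrt 5)/2 := rfl
    rw [add_zero, hgr, div_eq_div_iff (by positivity) (by norm_num)]
    field_simp
    nlinarith [hs5, h5pos]
  rw [hlim_eq] at hcomb
  apply hcomb.congr'
  filter_upwards [eventually_ge_atTop 1] with n hn1
  have hc : Real.sqrt 5 / goldenRatio ^ (n+1) ≠ 0 := by positivity
  have e1 : (Nat.fib (n+1) : ℝ) * Real.sqrt 5 / goldenRatio ^ (n+1) + Real.sqrt 5 * c / goldenRatio ^ (n+1)
      = ((Nat.fib (n+1) : ℝ) + c) * (Real.sqrt 5 / goldenRatio ^ (n+1)) := by ring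
  have e2 : (Nat.fib (n+1) : ℝ) * Real.sqrt 5 / goldenRatio ^ (n+1)
        + (Nat.fib (n-1) : ℝ) * Real.sqrt 5 / goldenRatio ^ (n+1)
      = ((Nat.fib (n+1) : ℝ) + (Nat.fib (n-1) : ℝ)) * (Real.sqrt 5 / goldenRatio ^ (n+1)) := by ring
  rw [e1, e2, mul_div_mul_right _ _ hc]

theorem avg_ecc_lucasCube_tendsto'' :
    Filter.Tendsto
      (fun n : ℕ =>
        ((∑ u : LucasV n, gecc (lucasCube n) u : ℕ) : ℝ) / (Fintype.card (LucasV n)) / n)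
      Filter.atTop (nhds ((5 + Real.sqrt 5) / 10)) := by
  apply tendsto_of_tendsto_of_tendsto_of_le_of_le' (tendsto_ratio_shift (-1)) (tendsto_ratio_shift 1)
  · filter_upwards [Filter.eventually_ge_atTop 5] with n hn
    haveI : NeZero n := ⟨by omega⟩
    have hb := (sum_gecc_bounds (n := n) hn).1
    have hcard := card_lucasV (n := n) hn
    have hF : 1 ≤ Nat.fib (n + 1) := Nat.fib_pos.mpr (by omega)
    set S := ∑ u : LucasV n, gecc (lucasCube n) u with hS
    clear_value S
    rw [hcard, div_div]
    have hnpos : (0:ℝ) < (n:ℝ) := by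
      have : 0 < n := by omega
      exact_mod_cast this
    have hLpos : (0:ℝ) < (Nat.fib (n+1) : ℝ) + (Nat.fib (n-1) : ℝ) := by
      have h1 : (0:ℝ) < (Nat.fib (n+1) : ℝ) := by exact_mod_cast hF
      have h2 : (0:ℝ) ≤ (Nat.fib (n-1) : ℝ) := by positivity
      linarith
    have hSr : ((Nat.fib (n+1) : ℝ) - 1) * n ≤ (S:ℝ) := by
      have h2 : ((n * Nat.fib (n+1) - n : ℕ) : ℝ) = (n:ℝ) * (Nat.fib (n+1):ℝ) - n := by
        rw [Nat.cast_sub (by nlinarith [hF, show 1 ≤ n by omega])]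
        push_cast
        ring
      calc ((Nat.fib (n+1) : ℝ) - 1) * n = (n:ℝ) * (Nat.fib (n+1):ℝ) - n := by ring
      _ = ((n * Nat.fib (n+1) - n : ℕ) : ℝ) := h2.symm
      _ ≤ (S:ℝ) := by exact_mod_cast hb
    push_cast
    rw [show ((Nat.fib (n+1):ℝ) + -1) = (Nat.fib (n+1):ℝ) - 1 by ring]
    rw [div_le_div_iff₀ hLpos (by positivity)]
    calc ((Nat.fib (n+1):ℝ) - 1) * (((Nat.fib (n+1):ℝ) + (Nat.fib (n-1):ℝ)) * n)
        = (((Nat.fib (n+1):ℝ) - 1) * n) * ((Nat.fib (n+1):ℝ) + (Nat.fib (n-1):ℝ)) := by ring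
    _ ≤ (S:ℝ) * ((Nat.fib (n+1):ℝ) + (Nat.fib (n-1):ℝ)) :=
        mul_le_mul_of_nonneg_right hSr (le_of_lt hLpos)
  · filter_upwards [Filter.eventually_ge_atTop 5] with n hn
    haveI : NeZero n := ⟨by omega⟩
    have hb := (sum_gecc_bounds (n := n) hn).2
    have hcard := card_lucasV (n := n) hn
    have hF : 1 ≤ Nat.fib (n + 1) := Nat.fib_pos.mpr (by omega)
    set S := ∑ u : LucasV n, gecc (lucasCube n) u with hS
    clear_value S
    rw [hcard, div_div]
    have hnpos : (0:ℝ) < (n:ℝ) := by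
      have : 0 < n := by omega
      exact_mod_cast this
    have hLpos : (0:ℝ) < (Nat.fib (n+1) : ℝ) + (Nat.fib (n-1) : ℝ) := by
      have h1 : (0:ℝ) < (Nat.fib (n+1) : ℝ) := by exact_mod_cast hF
      have h2 : (0:ℝ) ≤ (Nat.fib (n-1) : ℝ) := by positivity
      linarith
    have hSr : (S:ℝ) ≤ ((Nat.fib (n+1) : ℝ) + 1) * n := by
      have h1 : (S:ℝ) ≤ ((n * Nat.fib (n+1) + n : ℕ) : ℝ) := by exact_mod_cast hb
      calc (S:ℝ) ≤ ((n * Nat.fib (n+1) + n : ℕ) : ℝ) := h1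
      _ = ((Nat.fib (n+1) : ℝ) + 1) * n := by push_cast; ring
    push_cast
    rw [div_le_div_iff₀ (by positivity) hLpos]
    calc (S:ℝ) * ((Nat.fib (n+1):ℝ) + (Nat.fib (n-1):ℝ))
        ≤ (((Nat.fib (n+1):ℝ) + 1) * n) * ((Nat.fib (n+1):ℝ) + (Nat.fib (n-1):ℝ)) :=
        mul_le_mul_of_nonneg_right hSr (le_of_lt hLpos)
    _ = ((Nat.fib (n+1):ℝ) + 1) * (((Nat.fib (n+1):ℝ) + (Nat.fib (n-1):ℝ)) * n) := by ring

end Analysis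

/-- The average eccentricity of Λ_n, divided by n, converges to (5+√5)/10. -/
theorem avg_ecc_lucasCube_tendsto :
    Filter.Tendsto
      (fun n : ℕ =>
        ((∑ u : LucasV n, gecc (lucasCube n) u : ℕ) : ℝ) / (Fintype.card (LucasV n)) / n)
      Filter.atTop (nhds ((5 + Real.sqrt 5) / 10)) := by
  exact avg_ecc_lucasCube_tendsto''
end

section
/- The average degree of the Lucas cube Λ_n, divided by n, converges to (5−√5)/5 as n → ∞. -/
open Finset

section Step1
variable {n : ℕ}

lemma fibPred_iff' (v : Fin n → Bool) :
    FibPred n v ↔ ∀ (i : ℕ) (h : i + 1 < n),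
      ¬(v ⟨i, by omega⟩ = true ∧ v ⟨i+1, h⟩ = true) := by
  constructor
  · intro H i h
    exact H ⟨i, by omega⟩ ⟨i+1, h⟩ rfl
  · intro H i j hj
    have hh : (i : ℕ) + 1 < n := hj ▸ j.isLt
    have hje : j = ⟨(i : ℕ)+1, hh⟩ := Fin.ext hj
    rw [hje]
    exact H i hh

lemma lucasPred_iff' (v : Fin n → Bool) :
    LucasPred n v ↔ ∀ (i : ℕ) (h : i < n),
      ¬(v ⟨i, h⟩ = true ∧ v ⟨(i+1) % n, Nat.mod_lt _ (by omega)⟩ = true) := by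
  constructor
  · intro H i h
    exact H ⟨i, h⟩ ⟨(i+1) % n, Nat.mod_lt _ (by omega)⟩ rfl
  · intro H i j hj
    have hn : 0 < n := i.pos
    have hje : j = ⟨((i : ℕ)+1) % n, Nat.mod_lt _ hn⟩ := Fin.ext hj
    rw [hje]
    exact H i i.isLt

end Step1
section Step2
variable {n : ℕ}

/-- The finset of Fibonacci strings. -/
def fbs (n : ℕ) : Finset (Fin n → Bool) := Finset.univ.filter (FibPred n)

lemma finmk_zero {m : ℕ} (h : 0 < m + 1) : (⟨0, h⟩ : Fin (m+1)) = 0 :=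
  Fin.ext (by simp)

lemma cons_mk_zero (b : Bool) (w : Fin n → Bool) (h : 0 < n + 1) :
    Fin.cons (α := fun _ => Bool) b w ⟨0, h⟩ = b := by
  rw [finmk_zero]; exact Fin.cons_zero _ _

lemma cons_mk_succ (b : Bool) (w : Fin n → Bool) (i : ℕ) (h : i + 1 < n + 1) :
    Fin.cons (α := fun _ => Bool) b w ⟨i+1, h⟩ = w ⟨i, Nat.lt_of_succ_lt_succ h⟩ := by
  have h2 := Fin.cons_succ (α := fun _ => Bool) b w ⟨i, Nat.lt_of_succ_lt_succ h⟩
  have e : (⟨i+1, h⟩ : Fin (n+1)) = Fin.succ ⟨i, Nat.lt_of_succ_lt_succ h⟩ := Fin.ext rfl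
  rw [e]; exact h2

lemma fibPred_cons {b : Bool} {w : Fin n → Bool} :
    FibPred (n+1) (Fin.cons b w) ↔
      FibPred n w ∧ ∀ h : 0 < n, ¬(b = true ∧ w ⟨0, h⟩ = true) := by
  rw [fibPred_iff', fibPred_iff']
  constructor
  · intro H
    refine ⟨fun i h => ?_, fun h => ?_⟩
    · have := H (i+1) (by omega)
      rw [cons_mk_succ, cons_mk_succ] at this
      exact this
    · have := H 0 (by omega)
      rw [cons_mk_zero, cons_mk_succ] at this
      exact this
  · rintro ⟨H1, H2⟩ i h
    match i with
    | 0 =>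
      rw [cons_mk_zero, cons_mk_succ]
      exact H2 (by omega)
    | (i+1) =>
      rw [cons_mk_succ, cons_mk_succ]
      exact H1 i (by omega)

lemma fbs_card_rec (n : ℕ) : (fbs (n+2)).card = (fbs (n+1)).card + (fbs n).card := by
  classical
  rw [← Finset.card_filter_add_card_filter_not
    (s := fbs (n+2)) (p := fun v => v 0 = false)]
  congr 1
  · -- v 0 = false case ↔ fbs (n+1)
    apply Finset.card_nbij' (fun v => Fin.tail v) (fun w => Fin.cons false w)
    · intro v hv
      simp only [Finset.mem_coe, fbs, Finset.mem_filter, Finset.mem_univ, true_and] at hv ⊢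
      have : FibPred (n+2) (Fin.cons (v 0) (Fin.tail v)) := by
        rw [Fin.cons_self_tail]; exact hv.1
      exact (fibPred_cons.mp this).1
    · intro w hw
      simp only [Finset.mem_coe, fbs, Finset.mem_filter, Finset.mem_univ, true_and] at hw ⊢
      exact ⟨fibPred_cons.mpr ⟨hw, fun h => by simp⟩, rfl⟩
    · intro v hv
      simp only [Finset.mem_coe, fbs, Finset.mem_filter, Finset.mem_univ, true_and] at hv
      dsimp only
      rw [← hv.2, Fin.cons_self_tail]
    · intro w _
      exact Fin.tail_cons _ _
  · -- v 0 = true case ↔ fbs n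
    apply Finset.card_nbij' (fun v => Fin.tail (Fin.tail v))
      (fun w => Fin.cons true (Fin.cons false w))
    · intro v hv
      simp only [Finset.mem_coe, fbs, Finset.mem_filter, Finset.mem_univ, true_and] at hv ⊢
      have h1 : FibPred (n+2) (Fin.cons (v 0) (Fin.tail v)) := by
        rw [Fin.cons_self_tail]; exact hv.1
      have h2 := (fibPred_cons.mp h1).1
      have h3 : FibPred (n+1) (Fin.cons (Fin.tail v 0) (Fin.tail (Fin.tail v))) := by
        rw [Fin.cons_self_tail]; exact h2
      exact (fibPred_cons.mp h3).1
    · intro w hw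
      simp only [Finset.mem_coe, fbs, Finset.mem_filter, Finset.mem_univ, true_and] at hw ⊢
      constructor
      · refine fibPred_cons.mpr ⟨fibPred_cons.mpr ⟨hw, fun h => by simp⟩, fun h => ?_⟩
        rw [cons_mk_zero]; simp
      · simp
    · intro v hv
      simp only [Finset.mem_coe, fbs, Finset.mem_filter, Finset.mem_univ, true_and] at hv
      have hv0 : v 0 = true := by
        cases h : v 0
        · exact absurd h hv.2
        · rfl
      have h1 : FibPred (n+2) (Fin.cons (v 0) (Fin.tail v)) := by
        rw [Fin.cons_self_tail]; exact hv.1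
      have hv1 : Fin.tail v 0 = false := by
        have h4 := (fibPred_cons.mp h1).2 (by omega)
        rw [hv0] at h4
        cases h : Fin.tail v 0
        · rfl
        · rw [finmk_zero] at h4
          exact absurd ⟨rfl, h⟩ h4
      conv_rhs => rw [← Fin.cons_self_tail v, ← Fin.cons_self_tail (Fin.tail v)]
      rw [hv0, hv1]
    · intro w _
      dsimp only
      rw [Fin.tail_cons, Fin.tail_cons]

lemma fbs_card (n : ℕ) : (fbs n).card = Nat.fib (n + 2) := by
  induction n using Nat.strong_induction_on with
  | _ n ih =>
    match n with
    | 0 => decide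
    | 1 => decide
    | (n+2) =>
      rw [fbs_card_rec, ih (n+1) (by omega), ih n (by omega)]
      rw [show Nat.fib (n+2+2) = Nat.fib (n+2) + Nat.fib (n+2+1) from Nat.fib_add_two]
      rw [show n+1+2 = n+2+1 from rfl]
      omega

end Step2
section Step3
variable {n : ℕ}

/-- The finset of Lucas strings. -/
def lbs (n : ℕ) : Finset (Fin n → Bool) := Finset.univ.filter (LucasPred n)

lemma veq {m : ℕ} (v : Fin m → Bool) {a b : ℕ} (ha : a < m) (hb : b < m) (h : a = b) :
    v ⟨a, ha⟩ = v ⟨b, hb⟩ := by subst h; rfl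

lemma bool_true_of_ne_false {b : Bool} (h : ¬ b = false) : b = true := by
  cases b
  · exact absurd rfl h
  · rfl

lemma fmk_ext {m a b : ℕ} (ha : a < m) (hb : b < m) (h : a = b) :
    (⟨a, ha⟩ : Fin m) = ⟨b, hb⟩ := by subst h; rfl

lemma lucasPred_cons_false {w : Fin (n+1) → Bool} :
    LucasPred (n+2) (Fin.cons false w) ↔ FibPred (n+1) w := by
  rw [lucasPred_iff', fibPred_iff']
  constructor
  · intro H i h
    have H2 := H (i+1) (by omega)
    rw [cons_mk_succ] at H2
    intro hc
    refine H2 ⟨hc.1, ?_⟩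
    have e : Fin.cons (α := fun _ => Bool) false w
        ⟨(i+1+1) % (n+2), Nat.mod_lt _ (by omega)⟩ = w ⟨i+1, h⟩ := by
      rw [show (⟨(i+1+1) % (n+2), Nat.mod_lt _ (by omega)⟩ : Fin (n+2))
          = ⟨i+2, by omega⟩ from fmk_ext _ _ (Nat.mod_eq_of_lt (by omega))]
      exact cons_mk_succ false w (i+1) (by omega)
    rw [e]; exact hc.2
  · intro H i h
    match i with
    | 0 =>
      rw [cons_mk_zero]; simp
    | (i+1) =>
      rw [cons_mk_succ]
      by_cases hle : i + 2 < n + 2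
      · have e : Fin.cons (α := fun _ => Bool) false w
            ⟨(i+1+1) % (n+2), Nat.mod_lt _ (by omega)⟩ = w ⟨i+1, by omega⟩ := by
          rw [show (⟨(i+1+1) % (n+2), Nat.mod_lt _ (by omega)⟩ : Fin (n+2))
              = ⟨i+2, hle⟩ from fmk_ext _ _ (Nat.mod_eq_of_lt hle)]
          exact cons_mk_succ false w (i+1) hle
        rw [e]
        intro hc
        exact H i (by omega) ⟨hc.1, hc.2⟩
      · have e : Fin.cons (α := fun _ => Bool) false w
            ⟨(i+1+1) % (n+2), Nat.mod_lt _ (by omega)⟩ = false := by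
          rw [show (⟨(i+1+1) % (n+2), Nat.mod_lt _ (by omega)⟩ : Fin (n+2))
              = ⟨0, by omega⟩ from fmk_ext _ _
                (by rw [show i+1+1 = n+2 by omega]; exact Nat.mod_self _)]
          exact cons_mk_zero false w (by omega)
        rw [e]; simp

/-- Insert true at position 0 with guard zeros. -/
def gmap (n : ℕ) (w : Fin n → Bool) : Fin (n+3) → Bool := fun k =>
  if h : 2 ≤ k.val ∧ k.val ≤ n + 1 then w ⟨k.val - 2, by omega⟩ else decide (k.val = 0)

lemma gmap_val (w : Fin n → Bool) (i : ℕ) (h : i < n) (h' : i + 2 < n + 3) :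
    gmap n w ⟨i+2, h'⟩ = w ⟨i, h⟩ := by
  show (if hh : 2 ≤ i+2 ∧ i+2 ≤ n + 1 then w ⟨i+2-2, by omega⟩ else decide (i+2 = 0))
      = w ⟨i, h⟩
  rw [dif_pos (by omega)]
  exact veq w _ _ (by omega)

lemma gmap_zero (w : Fin n → Bool) (h : (0:ℕ) < n+3) : gmap n w ⟨0, h⟩ = true := by
  show (if hh : 2 ≤ 0 ∧ 0 ≤ n + 1 then w ⟨0-2, by omega⟩ else decide ((0:ℕ) = 0)) = true
  rw [dif_neg (by omega)]
  simp

lemma gmap_one (w : Fin n → Bool) (h : (1:ℕ) < n+3) : gmap n w ⟨1, h⟩ = false := by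
  show (if hh : 2 ≤ 1 ∧ 1 ≤ n + 1 then w ⟨1-2, by omega⟩ else decide ((1:ℕ) = 0)) = false
  rw [dif_neg (by omega)]
  simp

lemma gmap_last (w : Fin n → Bool) (h : n+2 < n+3) : gmap n w ⟨n+2, h⟩ = false := by
  show (if hh : 2 ≤ n+2 ∧ n+2 ≤ n + 1 then w ⟨n+2-2, by omega⟩ else decide (n+2 = 0)) = false
  rw [dif_neg (by omega)]
  simp

lemma lucasPred_gmap {w : Fin n → Bool} (hw : FibPred n w) :
    LucasPred (n+3) (gmap n w) := by
  rw [lucasPred_iff']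
  intro i h hc
  rcases Nat.lt_or_ge i 2 with h2 | h2
  · match i with
    | 0 =>
      have e := (veq (gmap n w) (Nat.mod_lt _ (by omega)) (by omega : (1:ℕ) < n+3)
        (Nat.mod_eq_of_lt (by omega) : (0+1) % (n+3) = 1)).trans (gmap_one w (by omega))
      rw [e] at hc
      exact Bool.false_ne_true hc.2
    | 1 =>
      rw [gmap_one] at hc
      exact Bool.false_ne_true hc.1
  · rcases Nat.lt_or_ge i (n+1) with h3 | h3
    · obtain ⟨k, rfl⟩ : ∃ k, i = k + 2 := ⟨i - 2, by omega⟩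
      have hc1 := hc.1
      have hc2 := hc.2
      rw [gmap_val w k (by omega)] at hc1
      have e : gmap n w ⟨(k+2+1) % (n+3), Nat.mod_lt _ (by omega)⟩
          = w ⟨k+1, by omega⟩ := by
        rw [show (⟨(k+2+1) % (n+3), Nat.mod_lt _ (by omega)⟩ : Fin (n+3))
            = ⟨(k+1)+2, by omega⟩ from fmk_ext _ _ (Nat.mod_eq_of_lt (by omega))]
        exact gmap_val w (k+1) (by omega) (by omega)
      rw [e] at hc2
      exact (fibPred_iff' w).mp hw k (by omega) ⟨hc1, hc2⟩
    · rcases Nat.lt_or_ge i (n+2) with h4 | h4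
      · have hi : i = n + 1 := by omega
        subst hi
        have e : gmap n w ⟨(n+1+1) % (n+3), Nat.mod_lt _ (by omega)⟩ = false := by
          rw [show (⟨(n+1+1) % (n+3), Nat.mod_lt _ (by omega)⟩ : Fin (n+3))
              = ⟨n+2, by omega⟩ from fmk_ext _ _ (Nat.mod_eq_of_lt (by omega))]
          exact gmap_last w (by omega)
        rw [e] at hc
        exact Bool.false_ne_true hc.2
      · have hi : i = n + 2 := by omega
        subst hi
        rw [gmap_last] at hc
        exact Bool.false_ne_true hc.1

lemma lucas_true_parts {v : Fin (n+3) → Bool} (hv : LucasPred (n+3) v)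
    (h0 : v 0 = true) :
    v ⟨1, by omega⟩ = false ∧ v ⟨n+2, by omega⟩ = false := by
  have h00 : v ⟨0, by omega⟩ = true := by rw [finmk_zero]; exact h0
  constructor
  · have H := (lucasPred_iff' v).mp hv 0 (by omega)
    by_contra hne
    exact H ⟨h00, (veq v _ _ (Nat.mod_eq_of_lt (by omega) : (0+1) % (n+3) = 1)).trans
      (bool_true_of_ne_false hne)⟩
  · have H := (lucasPred_iff' v).mp hv (n+2) (by omega)
    by_contra hne
    exact H ⟨bool_true_of_ne_false hne,
      (veq v _ _ (Nat.mod_self _ : (n+2+1) % (n+3) = 0)).trans h00⟩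

lemma fibPred_mid {v : Fin (n+3) → Bool} (hv : LucasPred (n+3) v) :
    FibPred n (fun k : Fin n => v ⟨k.val + 2, by omega⟩) := by
  rw [fibPred_iff']
  intro i h hc
  have hc1 : v ⟨i+2, by omega⟩ = true := hc.1
  have hc2 : v ⟨i+1+2, by omega⟩ = true := hc.2
  have H := (lucasPred_iff' v).mp hv (i+2) (by omega)
  exact H ⟨hc1, (veq v _ _ (Nat.mod_eq_of_lt (by omega) : (i+2+1) % (n+3) = i+1+2)).trans hc2⟩

lemma lbs_card (n : ℕ) : (lbs (n+3)).card = Nat.fib (n+4) + Nat.fib (n+2) := by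
  classical
  rw [← fbs_card (n+2), ← fbs_card n]
  rw [← Finset.card_filter_add_card_filter_not
    (s := lbs (n+3)) (p := fun v => v 0 = false)]
  congr 1
  · apply Finset.card_nbij' (fun v => Fin.tail v) (fun w => Fin.cons false w)
    · intro v hv
      simp only [Finset.mem_coe, lbs, fbs, Finset.mem_filter, Finset.mem_univ, true_and] at hv ⊢
      have : LucasPred (n+3) (Fin.cons (v 0) (Fin.tail v)) := by
        rw [Fin.cons_self_tail]; exact hv.1
      rw [hv.2] at this
      exact lucasPred_cons_false.mp this
    · intro w hw
      simp only [Finset.mem_coe, lbs, fbs, Finset.mem_filter, Finset.mem_univ, true_and] at hw ⊢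
      exact ⟨lucasPred_cons_false.mpr hw, rfl⟩
    · intro v hv
      simp only [Finset.mem_coe, lbs, Finset.mem_filter, Finset.mem_univ, true_and] at hv
      dsimp only
      rw [← hv.2, Fin.cons_self_tail]
    · intro w _
      exact Fin.tail_cons _ _
  · apply Finset.card_nbij' (fun v => fun k : Fin n => v ⟨k.val + 2, by omega⟩)
      (fun w => gmap n w)
    · intro v hv
      simp only [Finset.mem_coe, lbs, fbs, Finset.mem_filter, Finset.mem_univ, true_and] at hv ⊢
      exact fibPred_mid hv.1
    · intro w hw
      simp only [Finset.mem_coe, lbs, fbs, Finset.mem_filter, Finset.mem_univ, true_and] at hw ⊢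
      refine ⟨lucasPred_gmap hw, ?_⟩
      rw [show (0 : Fin (n+3)) = ⟨0, by omega⟩ from (finmk_zero _).symm, gmap_zero]
      simp
    · intro v hv
      simp only [Finset.mem_coe, lbs, Finset.mem_filter, Finset.mem_univ, true_and] at hv
      have h0 : v 0 = true := by
        cases h : v 0
        · exact absurd h hv.2
        · rfl
      obtain ⟨h1, hlast⟩ := lucas_true_parts hv.1 h0
      have h00 : v ⟨0, by omega⟩ = true := by rw [finmk_zero]; exact h0
      funext k
      obtain ⟨kv, hkv⟩ := k
      show gmap n (fun k : Fin n => v ⟨k.val + 2, by omega⟩) ⟨kv, hkv⟩ = v ⟨kv, hkv⟩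
      rcases Nat.lt_or_ge kv 1 with hk | hk
      · rw [show (⟨kv, hkv⟩ : Fin (n+3)) = ⟨0, by omega⟩ from fmk_ext _ _ (by omega)]
        rw [gmap_zero]
        exact h00.symm
      · rcases Nat.lt_or_ge kv 2 with hk1 | hk2
        · rw [show (⟨kv, hkv⟩ : Fin (n+3)) = ⟨1, by omega⟩ from fmk_ext _ _ (by omega)]
          rw [gmap_one]
          exact h1.symm
        · rcases Nat.lt_or_ge kv (n+2) with hk3 | hk4
          · rw [show (⟨kv, hkv⟩ : Fin (n+3)) = ⟨(kv - 2) + 2, by omega⟩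
              from fmk_ext _ _ (by omega)]
            rw [gmap_val _ _ (by omega)]
          · rw [show (⟨kv, hkv⟩ : Fin (n+3)) = ⟨n+2, by omega⟩ from fmk_ext _ _ (by omega)]
            rw [gmap_last]
            exact hlast.symm
    · intro w _
      funext k
      obtain ⟨kv, hkv⟩ := k
      exact gmap_val w kv hkv (by omega)
end Step3
section Step4
variable {n : ℕ}

/-- Flip one coordinate. -/
def flp (i : Fin n) (v : Fin n → Bool) : Fin n → Bool := Function.update v i (!v i)

lemma flp_self (i : Fin n) (v : Fin n → Bool) : flp i v i = !v i :=
  Function.update_self _ _ _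

lemma flp_ne {i j : Fin n} (h : j ≠ i) (v : Fin n → Bool) : flp i v j = v j :=
  Function.update_of_ne h _ _

lemma flp_flp (i : Fin n) (v : Fin n → Bool) : flp i (flp i v) = v := by
  funext j
  by_cases h : j = i
  · subst h; rw [flp_self, flp_self, Bool.not_not]
  · rw [flp_ne h, flp_ne h]

lemma diff_filter_flp (u : Fin n → Bool) (i : Fin n) :
    (Finset.univ.filter fun j => u j ≠ flp i u j) = {i} := by
  ext j
  simp only [Finset.mem_filter, Finset.mem_univ, true_and, Finset.mem_singleton]
  by_cases h : j = i
  · subst h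
    rw [flp_self]
    simp
  · rw [flp_ne h]
    simp [h]

lemma diffCount_flp (u : Fin n → Bool) (i : Fin n) : diffCount u (flp i u) = 1 := by
  rw [diffCount, diff_filter_flp, Finset.card_singleton]

lemma diffCount_one {u v : Fin n → Bool} (h : diffCount u v = 1) : ∃ i, v = flp i u := by
  rw [diffCount, Finset.card_eq_one] at h
  obtain ⟨i, hi⟩ := h
  refine ⟨i, funext fun j => ?_⟩
  by_cases hji : j = i
  · subst hji
    have hmem : j ∈ Finset.univ.filter fun k => u k ≠ v k := by
      rw [hi]; exact Finset.mem_singleton_self j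
    simp only [Finset.mem_filter, Finset.mem_univ, true_and] at hmem
    rw [flp_self]
    cases hu : u j <;> cases hv : v j <;> simp_all
  · have hmem : j ∉ Finset.univ.filter fun k => u k ≠ v k := by
      rw [hi]; simp [hji]
    simp only [Finset.mem_filter, Finset.mem_univ, true_and, not_not] at hmem
    rw [flp_ne hji]
    exact hmem.symm

lemma lucasPred_anti {v w : Fin n → Bool} (hle : ∀ j, w j = true → v j = true)
    (hv : LucasPred n v) : LucasPred n w :=
  fun i j hij hc => hv i j hij ⟨hle _ hc.1, hle _ hc.2⟩

lemma lucasPred_flp_true {v : Fin n → Bool} (hv : LucasPred n v) {i : Fin n}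
    (hi : v i = true) : LucasPred n (flp i v) := by
  refine lucasPred_anti (fun j hj => ?_) hv
  by_cases h : j = i
  · subst h; rw [flp_self, hi] at hj; simp at hj
  · rw [flp_ne h] at hj; exact hj

lemma degree_eq (u : LucasV n) :
    (lucasCube n).degree u
      = (Finset.univ.filter fun i : Fin n => LucasPred n (flp i u.1)).card := by
  rw [← SimpleGraph.card_neighborFinset_eq_degree]
  refine (Finset.card_bij'
    (i := fun (v : LucasV n) (hv : v ∈ (lucasCube n).neighborFinset u) =>
      (Finset.univ.filter fun k => u.1 k ≠ v.1 k).min' (by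
        have hd : diffCount u.1 v.1 = 1 :=
          (SimpleGraph.mem_neighborFinset _ _ _).mp hv
        rw [diffCount] at hd
        exact Finset.card_pos.mp (by omega)))
    (t := Finset.univ.filter fun i : Fin n => LucasPred n (flp i u.1))
    (j := fun (i : Fin n) (hi : i ∈ _) =>
      (⟨flp i u.1, by simpa using hi⟩ : LucasV n))
    ?_ ?_ ?_ ?_)
  · intro v hv
    have hd : diffCount u.1 v.1 = 1 := (SimpleGraph.mem_neighborFinset _ _ _).mp hv
    obtain ⟨i, hi⟩ := diffCount_one hd
    have hset : (Finset.univ.filter fun k => u.1 k ≠ v.1 k) = {i} := by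
      rw [hi]; exact diff_filter_flp u.1 i
    simp only [hset, Finset.min'_singleton, Finset.mem_filter, Finset.mem_univ, true_and]
    rw [← hi]
    exact v.2
  · intro i hi
    refine (SimpleGraph.mem_neighborFinset _ _ _).mpr ?_
    exact diffCount_flp u.1 i
  · intro v hv
    have hd : diffCount u.1 v.1 = 1 := (SimpleGraph.mem_neighborFinset _ _ _).mp hv
    obtain ⟨i, hi⟩ := diffCount_one hd
    have hset : (Finset.univ.filter fun k => u.1 k ≠ v.1 k) = {i} := by
      rw [hi]; exact diff_filter_flp u.1 i
    apply Subtype.ext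
    simp only [hset, Finset.min'_singleton]
    exact hi.symm
  · intro i hi
    have hset := diff_filter_flp u.1 i
    simp only [hset, Finset.min'_singleton]

lemma filter_flp_card (i : Fin n) :
    ((lbs n).filter fun v => LucasPred n (flp i v)).card
      = 2 * ((lbs n).filter fun v => v i = true).card := by
  classical
  rw [← Finset.card_filter_add_card_filter_not
    (s := (lbs n).filter fun v => LucasPred n (flp i v)) (p := fun v => v i = true)]
  have hA : (((lbs n).filter fun v => LucasPred n (flp i v)).filter fun v => v i = true)
      = (lbs n).filter fun v => v i = true := by
    ext v
    simp only [Finset.mem_coe, Finset.mem_filter, lbs, Finset.mem_univ, true_and]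
    constructor
    · rintro ⟨⟨h1, _⟩, h3⟩; exact ⟨h1, h3⟩
    · rintro ⟨h1, h3⟩; exact ⟨⟨h1, lucasPred_flp_true h1 h3⟩, h3⟩
  have hB : (((lbs n).filter fun v => LucasPred n (flp i v)).filter fun v => ¬ v i = true).card
      = ((lbs n).filter fun v => v i = true).card := by
    apply Finset.card_nbij' (fun v => flp i v) (fun v => flp i v)
    · intro v hv
      simp only [Finset.mem_coe, Finset.mem_filter, lbs, Finset.mem_univ, true_and] at hv ⊢
      refine ⟨hv.1.2, ?_⟩
      rw [flp_self]
      cases h : v i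
      · rfl
      · exact absurd h hv.2
    · intro v hv
      simp only [Finset.mem_coe, Finset.mem_filter, lbs, Finset.mem_univ, true_and] at hv ⊢
      refine ⟨⟨lucasPred_flp_true hv.1 hv.2, by rw [flp_flp]; exact hv.1⟩, ?_⟩
      rw [flp_self, hv.2]
      simp
    · intro v _; exact flp_flp i v
    · intro v _; exact flp_flp i v
  rw [hA, hB, two_mul]

lemma fin_add_one_val [NeZero n] (i : Fin n) : ((i + 1 : Fin n)).val = (i.val + 1) % n := by
  rw [Fin.add_def, Fin.val_one']
  show (↑i + 1 % n) % n = (↑i + 1) % n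
  conv_lhs => rw [Nat.add_mod]
  conv_rhs => rw [Nat.add_mod]
  rw [Nat.mod_mod_of_dvd _ dvd_rfl]

lemma lucasPred_fin [NeZero n] (v : Fin n → Bool) :
    LucasPred n v ↔ ∀ i : Fin n, ¬(v i = true ∧ v (i + 1) = true) := by
  rw [lucasPred_iff']
  constructor
  · intro H i
    have := H i.val i.isLt
    have e1 : v ⟨i.val, i.isLt⟩ = v i := rfl
    have e2 : v ⟨(i.val + 1) % n, Nat.mod_lt _ i.pos⟩ = v (i + 1) :=
      congrArg v (Fin.ext (fin_add_one_val i).symm)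
    rw [e1, e2] at this
    exact this
  · intro H i h
    have := H ⟨i, h⟩
    have e2 : v ((⟨i, h⟩ : Fin n) + 1) = v ⟨(i + 1) % n, Nat.mod_lt _ (by omega)⟩ :=
      congrArg v (Fin.ext (fin_add_one_val ⟨i, h⟩))
    rw [e2] at this
    exact this

lemma lucasPred_rot [NeZero n] (c : Fin n) {v : Fin n → Bool} (hv : LucasPred n v) :
    LucasPred n (fun j => v (j + c)) := by
  rw [lucasPred_fin] at hv ⊢
  intro i
  have := hv (i + c)
  rwa [add_right_comm] at this

lemma lucas_pos_card [NeZero n] (i : Fin n) :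
    ((lbs n).filter fun v => v i = true).card
      = ((lbs n).filter fun v => v 0 = true).card := by
  apply Finset.card_nbij' (fun v => fun j => v (j + i)) (fun w => fun j => w (j - i))
  · intro v hv
    simp only [Finset.mem_coe, Finset.mem_filter, lbs, Finset.mem_univ, true_and] at hv ⊢
    exact ⟨lucasPred_rot i hv.1, by rw [zero_add]; exact hv.2⟩
  · intro w hw
    simp only [Finset.mem_coe, Finset.mem_filter, lbs, Finset.mem_univ, true_and] at hw ⊢
    constructor
    · have := lucasPred_rot (-i) hw.1
      simpa [sub_eq_add_neg] using this
    · rw [sub_self]; exact hw.2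
  · intro v _
    funext j
    show v (j - i + i) = v j
    rw [sub_add_cancel]
  · intro w _
    funext j
    show w (j + i - i) = w j
    rw [add_sub_cancel_right]

end Step4
section Step5

lemma lbs_zero_true_card (n : ℕ) :
    ((lbs (n+3)).filter fun v => v 0 = true).card = Nat.fib (n+2) := by
  classical
  rw [← fbs_card n]
  apply Finset.card_nbij' (fun v => fun k : Fin n => v ⟨k.val + 2, by omega⟩)
    (fun w => gmap n w)
  · intro v hv
    simp only [Finset.mem_coe, lbs, fbs, Finset.mem_filter, Finset.mem_univ, true_and] at hv ⊢
    exact fibPred_mid hv.1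
  · intro w hw
    simp only [Finset.mem_coe, lbs, fbs, Finset.mem_filter, Finset.mem_univ, true_and] at hw ⊢
    refine ⟨lucasPred_gmap hw, ?_⟩
    rw [show (0 : Fin (n+3)) = ⟨0, by omega⟩ from (finmk_zero _).symm, gmap_zero]
  · intro v hv
    simp only [Finset.mem_coe, lbs, Finset.mem_filter, Finset.mem_univ, true_and] at hv
    have h0 : v 0 = true := hv.2
    obtain ⟨h1, hlast⟩ := lucas_true_parts hv.1 h0
    have h00 : v ⟨0, by omega⟩ = true := by rw [finmk_zero]; exact h0
    funext k
    obtain ⟨kv, hkv⟩ := k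
    show gmap n (fun k : Fin n => v ⟨k.val + 2, by omega⟩) ⟨kv, hkv⟩ = v ⟨kv, hkv⟩
    rcases Nat.lt_or_ge kv 1 with hk | hk
    · rw [show (⟨kv, hkv⟩ : Fin (n+3)) = ⟨0, by omega⟩ from fmk_ext _ _ (by omega)]
      rw [gmap_zero]
      exact h00.symm
    · rcases Nat.lt_or_ge kv 2 with hk1 | hk2
      · rw [show (⟨kv, hkv⟩ : Fin (n+3)) = ⟨1, by omega⟩ from fmk_ext _ _ (by omega)]
        rw [gmap_one]
        exact h1.symm
      · rcases Nat.lt_or_ge kv (n+2) with hk3 | hk4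
        · rw [show (⟨kv, hkv⟩ : Fin (n+3)) = ⟨(kv - 2) + 2, by omega⟩
            from fmk_ext _ _ (by omega)]
          rw [gmap_val _ _ (by omega)]
        · rw [show (⟨kv, hkv⟩ : Fin (n+3)) = ⟨n+2, by omega⟩ from fmk_ext _ _ (by omega)]
          rw [gmap_last]
          exact hlast.symm
  · intro w _
    funext k
    obtain ⟨kv, hkv⟩ := k
    exact gmap_val w kv hkv (by omega)

lemma lucas_vcard (m : ℕ) :
    Fintype.card (LucasV (m+3)) = Nat.fib (m+4) + Nat.fib (m+2) := by
  rw [← lbs_card m, ← Finset.card_univ]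
  refine Finset.card_bij' (fun (u : LucasV (m+3)) (_ : u ∈ Finset.univ) => u.1)
    (fun v (hv : v ∈ lbs (m+3)) =>
      (⟨v, by simpa [lbs] using hv⟩ : LucasV (m+3))) ?_ ?_ ?_ ?_
  · intro u _
    simp [lbs, u.2]
  · intro v hv
    exact Finset.mem_univ _
  · intro u _
    rfl
  · intro v hv
    rfl

lemma lucas_degsum (m : ℕ) :
    (∑ u : LucasV (m+3), (lucasCube (m+3)).degree u) = (m+3) * (2 * Nat.fib (m+2)) := by
  classical
  have step1 : (∑ u : LucasV (m+3), (lucasCube (m+3)).degree u)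
      = ∑ v ∈ lbs (m+3),
          (Finset.univ.filter fun i : Fin (m+3) => LucasPred (m+3) (flp i v)).card := by
    refine Finset.sum_bij' (fun (u : LucasV (m+3)) (_ : u ∈ Finset.univ) => u.1)
      (fun v (hv : v ∈ lbs (m+3)) =>
        (⟨v, by simpa [lbs] using hv⟩ : LucasV (m+3))) ?_ ?_ ?_ ?_ ?_
    · intro u _
      simp [lbs, u.2]
    · intro v hv
      exact Finset.mem_univ _
    · intro u _
      rfl
    · intro v hv
      rfl
    · intro u _
      exact degree_eq u
  rw [step1]
  have step2 : ∀ v ∈ lbs (m+3),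
      (Finset.univ.filter fun i : Fin (m+3) => LucasPred (m+3) (flp i v)).card
      = ∑ i : Fin (m+3), ite (LucasPred (m+3) (flp i v)) 1 0 := fun v _ =>
    Finset.card_filter _ _
  rw [Finset.sum_congr rfl step2, Finset.sum_comm]
  have step3 : ∀ i : Fin (m+3),
      (∑ v ∈ lbs (m+3), ite (LucasPred (m+3) (flp i v)) 1 0)
      = 2 * Nat.fib (m+2) := by
    intro i
    rw [← Finset.card_filter, filter_flp_card i, lucas_pos_card i, lbs_zero_true_card]
  rw [Finset.sum_congr rfl (fun i _ => step3 i), Finset.sum_const, Finset.card_univ,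
    Fintype.card_fin, smul_eq_mul]

end Step5
section Step6

lemma fib_ratio_tendsto :
    Filter.Tendsto
      (fun k : ℕ => 2 * (Nat.fib (k+2) : ℝ) / ((Nat.fib (k+4) : ℝ) + (Nat.fib (k+2) : ℝ)))
      Filter.atTop (nhds ((5 - Real.sqrt 5) / 5)) := by
  have hs5 : (0:ℝ) < Real.sqrt 5 := Real.sqrt_pos.mpr (by norm_num)
  have hs : Real.sqrt 5 ^ 2 = 5 := Real.sq_sqrt (by norm_num)
  have hφ : (0:ℝ) < Real.goldenRatio := Real.goldenRatio_pos
  have hφ1 : (1:ℝ) < Real.goldenRatio := Real.one_lt_goldenRatio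
  have habs : |Real.goldenConj / Real.goldenRatio| < 1 := by
    rw [abs_div, abs_of_pos hφ, div_lt_one hφ]
    have h1 : |Real.goldenConj| < 1 := abs_lt.mpr ⟨Real.neg_one_lt_goldenConj, Real.goldenConj_neg.trans one_pos⟩
    exact h1.trans hφ1
  have hr : Filter.Tendsto (fun k : ℕ => (Real.goldenConj / Real.goldenRatio) ^ k)
      Filter.atTop (nhds 0) := tendsto_pow_atTop_nhds_zero_of_abs_lt_one habs
  -- limits of numerator and denominator of the geometric form
  have hnum : Filter.Tendsto
      (fun k : ℕ => 2 * (Real.goldenRatio^2 - Real.goldenConj^2 * (Real.goldenConj / Real.goldenRatio) ^ k))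
      Filter.atTop (nhds (2 * (Real.goldenRatio^2 - Real.goldenConj^2 * 0))) :=
    (Filter.Tendsto.sub tendsto_const_nhds (hr.const_mul _)).const_mul 2
  have hden : Filter.Tendsto
      (fun k : ℕ => (Real.goldenRatio^4 - Real.goldenConj^4 * (Real.goldenConj / Real.goldenRatio) ^ k)
        + (Real.goldenRatio^2 - Real.goldenConj^2 * (Real.goldenConj / Real.goldenRatio) ^ k))
      Filter.atTop (nhds ((Real.goldenRatio^4 - Real.goldenConj^4 * 0)
        + (Real.goldenRatio^2 - Real.goldenConj^2 * 0))) :=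
    Filter.Tendsto.add
      (Filter.Tendsto.sub tendsto_const_nhds (hr.const_mul _))
      (Filter.Tendsto.sub tendsto_const_nhds (hr.const_mul _))
  have hdenpos : (0:ℝ) < (Real.goldenRatio^4 - Real.goldenConj^4 * 0)
      + (Real.goldenRatio^2 - Real.goldenConj^2 * 0) := by
    simp only [mul_zero, sub_zero]
    positivity
  have key := hnum.div hden (ne_of_gt hdenpos)
  have hval : 2 * (Real.goldenRatio^2 - Real.goldenConj^2 * 0)
      / ((Real.goldenRatio^4 - Real.goldenConj^4 * 0) + (Real.goldenRatio^2 - Real.goldenConj^2 * 0))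
      = (5 - Real.sqrt 5) / 5 := by
    simp only [mul_zero, sub_zero]
    rw [show Real.goldenRatio^4 + Real.goldenRatio^2 = Real.goldenRatio^2 * (Real.goldenRatio^2 + 1) by ring,
      show 2 * Real.goldenRatio^2 = Real.goldenRatio^2 * 2 by ring,
      mul_div_mul_left _ _ (by positivity : Real.goldenRatio^2 ≠ 0)]
    rw [Real.goldenRatio_sq]
    rw [div_eq_div_iff (by nlinarith) (by norm_num : (5:ℝ) ≠ 0)]
    show (2:ℝ) * 5 = (5 - Real.sqrt 5) * ((1 + Real.sqrt 5)/2 + 1 + 1)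
    linear_combination hs / 2
  rw [hval] at key
  -- now convert via Binet
  refine key.congr fun k => ?_
  have hφk : (0:ℝ) < Real.goldenRatio ^ k := pow_pos hφ k
  have hcne : Real.goldenRatio ^ k / Real.sqrt 5 ≠ 0 := ne_of_gt (div_pos hφk hs5)
  have e1 : 2 * (Nat.fib (k+2) : ℝ)
      = (Real.goldenRatio ^ k / Real.sqrt 5)
        * (2 * (Real.goldenRatio^2 - Real.goldenConj^2 * (Real.goldenConj / Real.goldenRatio) ^ k)) := by
    rw [Real.coe_fib_eq, pow_add, pow_add]
    have ha : Real.goldenRatio ^ k ≠ 0 := hφk.ne'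
    have key2 : (Real.goldenConj / Real.goldenRatio) ^ k * Real.goldenRatio ^ k
        = Real.goldenConj ^ k := by rw [← mul_pow, div_mul_cancel₀ _ hφ.ne']
    linear_combination (2 * Real.goldenConj ^ 2 / Real.sqrt 5) * key2
  have e2 : (Nat.fib (k+4) : ℝ) + (Nat.fib (k+2) : ℝ)
      = (Real.goldenRatio ^ k / Real.sqrt 5)
        * ((Real.goldenRatio^4 - Real.goldenConj^4 * (Real.goldenConj / Real.goldenRatio) ^ k)
          + (Real.goldenRatio^2 - Real.goldenConj^2 * (Real.goldenConj / Real.goldenRatio) ^ k)) := by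
    rw [Real.coe_fib_eq, Real.coe_fib_eq, pow_add, pow_add, pow_add, pow_add]
    have ha : Real.goldenRatio ^ k ≠ 0 := hφk.ne'
    have key2 : (Real.goldenConj / Real.goldenRatio) ^ k * Real.goldenRatio ^ k
        = Real.goldenConj ^ k := by rw [← mul_pow, div_mul_cancel₀ _ hφ.ne']
    linear_combination ((Real.goldenConj ^ 4 + Real.goldenConj ^ 2) / Real.sqrt 5) * key2
  rw [e1, e2, mul_div_mul_left _ _ hcne]
  rfl

end Step6
/-- The average degree of Λ_n, divided by n, converges to (5-√5)/5. -/
theorem avg_deg_lucasCube_tendsto :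
    Filter.Tendsto
      (fun n : ℕ =>
        ((∑ u : LucasV n, (lucasCube n).degree u : ℕ) : ℝ) / (Fintype.card (LucasV n)) / n)
      Filter.atTop (nhds ((5 - Real.sqrt 5) / 5)) := by
  have hcomp := fib_ratio_tendsto.comp (Filter.tendsto_sub_atTop_nat 3)
  refine Filter.Tendsto.congr' ?_ hcomp
  filter_upwards [Filter.eventually_ge_atTop 3] with n hn
  obtain ⟨m, rfl⟩ : ∃ m, n = m + 3 := ⟨n - 3, by omega⟩
  show 2 * (Nat.fib ((m+3-3)+2) : ℝ) / ((Nat.fib ((m+3-3)+4) : ℝ) + (Nat.fib ((m+3-3)+2) : ℝ))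
    = _
  simp only [Nat.add_sub_cancel]
  rw [lucas_degsum, lucas_vcard]
  push_cast
  rw [div_div, mul_comm ((Nat.fib (m+4):ℝ) + (Nat.fib (m+2):ℝ)) ((m:ℝ)+3),
    mul_div_mul_left _ _ (by positivity : ((m:ℝ)+3) ≠ 0)]
end
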